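/- arXiv:2203.02000 — 5 statements merged into one kernel-verified Lean document; each statement's English description precedes it below -/
import Mathlib

section
/- Let U ⊆ ℂ^r be open, f : U → ℂ^r analytic, and x₀ ∈ U. Let ρ > 0 and B₁, B₂, B₃ ≥ 1 be real numbers such that D_ρ(x₀) ⊆ U, ‖df(x)‖ ≤ B₁ and ‖d²f(x)‖ ≤ B₂ for all x ∈ D_ρ(x₀), and df(x₀) is invertible with ‖df(x₀)⁻¹‖ ≤ B₃. Let ε, η > 0 satisfy ε ≤ min(ρ/2, 1/(2B₂B₃)) and η ≤ ε/(4rB₁B₃). Then for every x ∈ ℂ^r with ‖x − x₀‖ ≤ ε, the linear map FD_η f(x) is invertible, and the vector h = FD_η f(x)⁻¹ (f(x₀) − f(x)) satisfies ‖x + h − x₀‖ ≤ 2B₂B₃ε². -/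
set_option maxHeartbeats 1000000

open Set intervalIntegral

lemma taylor_half {E : Type*} [NormedAddCommGroup E] [NormedSpace ℂ E] [CompleteSpace E]
    (f : E → E) {s : Set E} (hf : AnalyticOnNhd ℂ f s)
    {C : ℝ} (hC : 0 ≤ C) {x y : E} (hseg : segment ℝ x y ⊆ s)
    (hlip : ∀ z ∈ segment ℝ x y, ‖fderiv ℂ f z - fderiv ℂ f x‖ ≤ C * ‖z - x‖) :
    ‖f y - f x - fderiv ℂ f x (y - x)‖ ≤ C / 2 * ‖y - x‖ ^ 2 := by
  set γ : ℝ → E := fun t => x + t • (y - x) with hγdef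
  have hmem : ∀ t ∈ Icc (0:ℝ) 1, γ t ∈ segment ℝ x y := by
    intro t ht
    rw [segment_eq_image']
    exact ⟨t, ht, rfl⟩
  have hγd : ∀ t : ℝ, HasDerivAt γ (y - x) t := by
    intro t
    exact (by simpa using (hasDerivAt_id t).smul_const (y - x) :
      HasDerivAt (fun u : ℝ => u • (y - x)) (y - x) t).const_add x
  set φ : ℝ → E := fun t => fderiv ℂ f (γ t) (y - x) - fderiv ℂ f x (y - x) with hφdef
  set g : ℝ → E := fun t => f (γ t) - t • (fderiv ℂ f x (y - x)) with hgdef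
  have hgd : ∀ t ∈ uIcc (0:ℝ) 1, HasDerivAt g (φ t) t := by
    intro t ht
    rw [uIcc_of_le zero_le_one] at ht
    have hz : γ t ∈ s := hseg (hmem t ht)
    have hF : HasFDerivAt f (fderiv ℂ f (γ t)) (γ t) :=
      ((hf _ hz).differentiableAt).hasFDerivAt
    have h1 : HasDerivAt (fun u => f (γ u)) (fderiv ℂ f (γ t) (y - x)) t := by
      have := (hF.restrictScalars ℝ).comp_hasDerivAt t (hγd t)
      exact this
    have h2 : HasDerivAt (fun u : ℝ => u • (fderiv ℂ f x (y - x)))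
        (fderiv ℂ f x (y - x)) t := by
      simpa using (hasDerivAt_id t).smul_const (fderiv ℂ f x (y - x))
    exact h1.sub h2
  have hγcont : Continuous γ := by fun_prop
  have hφcont : ContinuousOn φ (uIcc (0:ℝ) 1) := by
    rw [uIcc_of_le zero_le_one]
    have hdc : ContinuousOn (fderiv ℂ f) s := hf.fderiv.continuousOn
    have : ContinuousOn (fun t => fderiv ℂ f (γ t)) (Icc (0:ℝ) 1) :=
      hdc.comp hγcont.continuousOn (fun t ht => hseg (hmem t ht))
    exact ((this.clm_apply continuousOn_const).sub continuousOn_const)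
  have hφint : IntervalIntegrable φ MeasureTheory.volume 0 1 :=
    hφcont.intervalIntegrable
  have hFTC : ∫ t in (0:ℝ)..1, φ t = g 1 - g 0 :=
    integral_eq_sub_of_hasDerivAt hgd hφint
  have hg1 : g 1 - g 0 = f y - f x - fderiv ℂ f x (y - x) := by
    simp only [hgdef, hγdef, one_smul, zero_smul, sub_zero]
    have : x + (y - x) = y := by abel
    rw [this]
    abel
  have hbound : ‖∫ t in (0:ℝ)..1, φ t‖ ≤ |∫ t in (0:ℝ)..1, (C * ‖y - x‖ ^ 2) * t| := by
    refine (norm_integral_le_of_norm_le zero_le_one ?_ ?_).trans (le_abs_self _)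
    · refine MeasureTheory.ae_of_all _ ?_
      intro t ht
      have ht' : t ∈ Icc (0:ℝ) 1 := Ioc_subset_Icc_self ht
      have h1 : ‖φ t‖ ≤ ‖fderiv ℂ f (γ t) - fderiv ℂ f x‖ * ‖y - x‖ := by
        have := (fderiv ℂ f (γ t) - fderiv ℂ f x).le_opNorm (y - x)
        simpa [hφdef] using this
      have h2 : ‖fderiv ℂ f (γ t) - fderiv ℂ f x‖ ≤ C * (t * ‖y - x‖) := by
        have := hlip (γ t) (hmem t ht')
        have hn : ‖γ t - x‖ = t * ‖y - x‖ := by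
          simp [hγdef, norm_smul, abs_of_nonneg ht'.1]
        rwa [hn] at this
      calc ‖φ t‖ ≤ (C * (t * ‖y - x‖)) * ‖y - x‖ :=
            h1.trans (by gcongr)
        _ = (C * ‖y - x‖ ^ 2) * t := by ring
    · exact (continuousOn_const.mul continuousOn_id).intervalIntegrable
  have hval : ∫ t in (0:ℝ)..1, (C * ‖y - x‖ ^ 2) * t = C * ‖y - x‖ ^ 2 / 2 := by
    rw [intervalIntegral.integral_const_mul, integral_id]
    ring
  rw [hFTC, hg1] at hbound
  rw [hval] at hbound
  calc ‖f y - f x - fderiv ℂ f x (y - x)‖ ≤ |C * ‖y - x‖ ^ 2 / 2| := hbound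
    _ = C / 2 * ‖y - x‖ ^ 2 := by
        rw [abs_of_nonneg (by positivity)]; ring

lemma apply_eq_sum_single {r : ℕ} (A : (Fin r → ℂ) →L[ℂ] (Fin r → ℂ)) (v : Fin r → ℂ) :
    A v = ∑ j, v j • A (Pi.single j 1) := by
  have hv : v = ∑ j, v j • (Pi.single j (1:ℂ) : Fin r → ℂ) := by
    ext i
    simp [Pi.single_apply, Finset.sum_apply]
  conv_lhs => rw [hv]
  rw [map_sum]
  congr 1
  ext j
  rw [map_smul]

lemma norm_sum_smulRight_sub {r : ℕ} (A : (Fin r → ℂ) →L[ℂ] (Fin r → ℂ))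
    (c : Fin r → (Fin r → ℂ)) :
    ‖(∑ j, (ContinuousLinearMap.proj j : (Fin r → ℂ) →L[ℂ] ℂ).smulRight (c j)) - A‖ ≤
      ∑ j, ‖c j - A (Pi.single j 1)‖ := by
  have heq : (∑ j, (ContinuousLinearMap.proj j : (Fin r → ℂ) →L[ℂ] ℂ).smulRight (c j)) - A =
      ∑ j, (ContinuousLinearMap.proj j : (Fin r → ℂ) →L[ℂ] ℂ).smulRight
        (c j - A (Pi.single j 1)) := by
    ext v
    simp only [ContinuousLinearMap.sub_apply, ContinuousLinearMap.sum_apply,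
      ContinuousLinearMap.smulRight_apply, ContinuousLinearMap.proj_apply, smul_sub]
    rw [Finset.sum_sub_distrib, apply_eq_sum_single A v]
  rw [heq]
  refine (norm_sum_le _ _).trans ?_
  apply Finset.sum_le_sum
  intro j _
  rw [ContinuousLinearMap.norm_smulRight_apply]
  have hproj : ‖(ContinuousLinearMap.proj j : (Fin r → ℂ) →L[ℂ] ℂ)‖ ≤ 1 := by
    refine ContinuousLinearMap.opNorm_le_bound _ zero_le_one fun v => ?_
    simpa using norm_le_pi_norm v j
  nlinarith [norm_nonneg (c j - A (Pi.single j 1)), norm_nonneg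
    (ContinuousLinearMap.proj j : (Fin r → ℂ) →L[ℂ] ℂ)]


/- STATEMENT 0: explicit convergence of a finite-difference Newton step for
multivariate analytic functions. ℂ^r carries the sup norm (`Fin r → ℂ` with the
Pi norm). `FD r f η x` is the finite-difference approximation of `fderiv ℂ f x`. -/

/-- The finite-difference linear operator `FD_η f(x)`, sending the `j`-th standard
basis vector `e_j` to `(f (x + η e_j) - f x) / η`. -/
noncomputable def FD (r : ℕ) (f : (Fin r → ℂ) → (Fin r → ℂ)) (η : ℝ) (x : Fin r → ℂ) :
    (Fin r → ℂ) →L[ℂ] (Fin r → ℂ) :=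
  ∑ j : Fin r, (ContinuousLinearMap.proj j : (Fin r → ℂ) →L[ℂ] ℂ).smulRight
    ((η : ℂ)⁻¹ • (f (x + (η : ℂ) • (Pi.single j 1 : Fin r → ℂ)) - f x))

theorem statement0 (r : ℕ) (U : Set (Fin r → ℂ)) (hU : IsOpen U)
    (f : (Fin r → ℂ) → (Fin r → ℂ)) (hf : AnalyticOnNhd ℂ f U)
    (x₀ : Fin r → ℂ) (hx₀ : x₀ ∈ U)
    (ρ : ℝ) (hρ : 0 < ρ) (B₁ B₂ B₃ : ℝ) (hB₁ : 1 ≤ B₁) (hB₂ : 1 ≤ B₂) (hB₃ : 1 ≤ B₃)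
    (hball : Metric.ball x₀ ρ ⊆ U)
    (hd1 : ∀ x ∈ Metric.ball x₀ ρ, ‖fderiv ℂ f x‖ ≤ B₁)
    (hd2 : ∀ x ∈ Metric.ball x₀ ρ, ‖iteratedFDeriv ℂ 2 f x‖ ≤ B₂)
    (L₀ : (Fin r → ℂ) →L[ℂ] (Fin r → ℂ))
    (hL₀l : L₀.comp (fderiv ℂ f x₀) = ContinuousLinearMap.id ℂ (Fin r → ℂ))
    (hL₀r : (fderiv ℂ f x₀).comp L₀ = ContinuousLinearMap.id ℂ (Fin r → ℂ))
    (hL₀norm : ‖L₀‖ ≤ B₃)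
    (ε η : ℝ) (hε : 0 < ε) (hη : 0 < η)
    (hε' : ε ≤ min (ρ / 2) (1 / (2 * B₂ * B₃))) (hη' : η ≤ ε / (4 * r * B₁ * B₃))
    (x : Fin r → ℂ) (hx : ‖x - x₀‖ ≤ ε) :
    ∃ L : (Fin r → ℂ) →L[ℂ] (Fin r → ℂ),
      L.comp (FD r f η x) = ContinuousLinearMap.id ℂ (Fin r → ℂ) ∧
      (FD r f η x).comp L = ContinuousLinearMap.id ℂ (Fin r → ℂ) ∧
      ‖x + L (f x₀ - f x) - x₀‖ ≤ 2 * B₂ * B₃ * ε ^ 2 := by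
  have hB₁0 : (0:ℝ) < B₁ := lt_of_lt_of_le one_pos hB₁
  have hB₂0 : (0:ℝ) < B₂ := lt_of_lt_of_le one_pos hB₂
  have hB₃0 : (0:ℝ) < B₃ := lt_of_lt_of_le one_pos hB₃
  rcases Nat.eq_zero_or_pos r with hr | hr
  · -- degenerate case r = 0
    subst hr
    refine ⟨0, ?_, ?_, ?_⟩
    · exact ContinuousLinearMap.ext fun v => Subsingleton.elim _ _
    · exact ContinuousLinearMap.ext fun v => Subsingleton.elim _ _
    · have h0 : (x + (0 : (Fin 0 → ℂ) →L[ℂ] (Fin 0 → ℂ)) (f x₀ - f x) - x₀) = 0 :=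
        Subsingleton.elim _ _
      rw [h0, norm_zero]
      positivity
  -- main case
  haveI : Nonempty (Fin r) := Fin.pos_iff_nonempty.mp hr
  have hr1 : (1:ℝ) ≤ (r:ℝ) := by exact_mod_cast hr
  have hε1 : ε ≤ ρ / 2 := hε'.trans (min_le_left _ _)
  have hε2 : ε ≤ 1 / (2 * B₂ * B₃) := hε'.trans (min_le_right _ _)
  have hεB : B₂ * B₃ * ε ≤ 1 / 2 := by
    rw [le_div_iff₀ (by positivity)] at hε2
    nlinarith
  have hrη : (r:ℝ) * η ≤ ε / (4 * B₁ * B₃) := by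
    have h1 : (r:ℝ) * η ≤ (r:ℝ) * (ε / (4 * r * B₁ * B₃)) := by
      gcongr
    have h2 : (r:ℝ) * (ε / (4 * r * B₁ * B₃)) = ε / (4 * B₁ * B₃) := by
      have hr0 : (r:ℝ) ≠ 0 := by positivity
      field_simp
    rw [h2] at h1
    exact h1
  have hrη2 : (r:ℝ) * η * B₃ ≤ ε / 4 := by
    have h1 : (r:ℝ) * η * B₃ ≤ (ε / (4 * B₁ * B₃)) * B₃ := by gcongr
    have h2 : (ε / (4 * B₁ * B₃)) * B₃ ≤ ε / 4 := by
      rw [div_mul_eq_mul_div, div_le_div_iff₀ (by positivity) (by positivity)]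
      nlinarith [mul_nonneg (mul_nonneg hε.le hB₃0.le) (sub_nonneg.mpr hB₁)]
    exact h1.trans h2
  have hηε : η ≤ ε / 4 := by
    have h1 : η ≤ (r:ℝ) * η * B₃ := by
      nlinarith [mul_nonneg (sub_nonneg.mpr hr1) hη.le,
        mul_nonneg (mul_nonneg (sub_nonneg.mpr hB₃) (by positivity : (0:ℝ) ≤ (r:ℝ))) hη.le]
    linarith
  -- ball memberships
  have hxball : x ∈ Metric.ball x₀ ρ := by
    rw [Metric.mem_ball, dist_eq_norm]
    linarith
  have hnorm_e : ∀ j : Fin r, ‖((η:ℂ) • (Pi.single j 1 : Fin r → ℂ))‖ = η := by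
    intro j
    rw [norm_smul, Complex.norm_real, Pi.norm_single, norm_one, mul_one,
      Real.norm_eq_abs, abs_of_pos hη]
  have hxjball : ∀ j : Fin r, x + (η:ℂ) • (Pi.single j 1 : Fin r → ℂ) ∈ Metric.ball x₀ ρ := by
    intro j
    rw [Metric.mem_ball, dist_eq_norm]
    have : x + (η:ℂ) • (Pi.single j 1 : Fin r → ℂ) - x₀
        = (x - x₀) + (η:ℂ) • (Pi.single j 1 : Fin r → ℂ) := by abel
    rw [this]
    calc ‖(x - x₀) + (η:ℂ) • (Pi.single j 1 : Fin r → ℂ)‖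
        ≤ ‖x - x₀‖ + ‖(η:ℂ) • (Pi.single j 1 : Fin r → ℂ)‖ := norm_add_le _ _
      _ ≤ ε + η := by rw [hnorm_e j]; linarith
      _ < ρ := by linarith
  -- Lipschitz bound for the derivative on the ball
  have hdiff2 : ∀ z ∈ Metric.ball x₀ ρ, DifferentiableAt ℂ (fderiv ℂ f) z :=
    fun z hz => (hf.fderiv z (hball hz)).differentiableAt
  have hd2' : ∀ z ∈ Metric.ball x₀ ρ, ‖fderiv ℂ (fderiv ℂ f) z‖ ≤ B₂ := by
    intro z hz
    calc ‖fderiv ℂ (fderiv ℂ f) z‖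
        = ‖iteratedFDeriv ℂ 0 (fderiv ℂ (fderiv ℂ f)) z‖ := by rw [norm_iteratedFDeriv_zero]
      _ = ‖iteratedFDeriv ℂ 1 (fderiv ℂ f) z‖ := norm_iteratedFDeriv_fderiv
      _ = ‖iteratedFDeriv ℂ 2 f z‖ := norm_iteratedFDeriv_fderiv
      _ ≤ B₂ := hd2 z hz
  have hLip : ∀ w ∈ Metric.ball x₀ ρ, ∀ z ∈ Metric.ball x₀ ρ,
      ‖fderiv ℂ f z - fderiv ℂ f w‖ ≤ B₂ * ‖z - w‖ :=
    fun w hw z hz =>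
      (convex_ball x₀ ρ).norm_image_sub_le_of_norm_fderiv_le hdiff2 hd2' hw hz
  -- Taylor estimate on the ball
  have htay : ∀ w ∈ Metric.ball x₀ ρ, ∀ z ∈ Metric.ball x₀ ρ,
      ‖f z - f w - fderiv ℂ f w (z - w)‖ ≤ B₂ / 2 * ‖z - w‖ ^ 2 := by
    intro w hw z hz
    have hseg : segment ℝ w z ⊆ U :=
      fun ζ hζ => hball ((convex_ball x₀ ρ).segment_subset hw hz hζ)
    exact taylor_half f hf (le_of_lt hB₂0) hseg
      (fun ζ hζ => hLip w hw ζ ((convex_ball x₀ ρ).segment_subset hw hz hζ))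
  -- column estimates for FD
  have hηC : (η:ℂ) ≠ 0 := by
    exact_mod_cast ne_of_gt hη
  have hcol : ∀ j : Fin r,
      ‖(η:ℂ)⁻¹ • (f (x + (η:ℂ) • (Pi.single j 1 : Fin r → ℂ)) - f x)
        - fderiv ℂ f x (Pi.single j 1)‖ ≤ B₂ / 2 * η := by
    intro j
    set e : Fin r → ℂ := (Pi.single j 1 : Fin r → ℂ) with he
    have hkey : (η:ℂ)⁻¹ • (f (x + (η:ℂ) • e) - f x) - fderiv ℂ f x e
        = (η:ℂ)⁻¹ • (f (x + (η:ℂ) • e) - f x - fderiv ℂ f x ((η:ℂ) • e)) := by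
      simp only [smul_sub, map_smul, smul_smul, inv_mul_cancel₀ hηC, one_smul]
    rw [hkey]
    have hdiff : (x + (η:ℂ) • e) - x = (η:ℂ) • e := by abel
    have ht := htay x hxball (x + (η:ℂ) • e) (hxjball j)
    rw [hdiff] at ht
    rw [norm_smul]
    have hninv : ‖(η:ℂ)⁻¹‖ = η⁻¹ := by
      rw [norm_inv, Complex.norm_real, Real.norm_eq_abs, abs_of_pos hη]
    rw [hninv]
    calc η⁻¹ * ‖f (x + (η:ℂ) • e) - f x - fderiv ℂ f x ((η:ℂ) • e)‖
        ≤ η⁻¹ * (B₂ / 2 * ‖(η:ℂ) • e‖ ^ 2) := by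
          gcongr
      _ = B₂ / 2 * η := by
          rw [hnorm_e j]
          field_simp
  have hFDx : ‖FD r f η x - fderiv ℂ f x‖ ≤ (r:ℝ) * (B₂ / 2 * η) := by
    refine (norm_sum_smulRight_sub (fderiv ℂ f x) _).trans ?_
    calc (∑ j : Fin r, ‖(η:ℂ)⁻¹ • (f (x + (η:ℂ) • (Pi.single j 1 : Fin r → ℂ)) - f x)
          - fderiv ℂ f x (Pi.single j 1)‖)
        ≤ ∑ _j : Fin r, (B₂ / 2 * η) := Finset.sum_le_sum (fun j _ => hcol j)
      _ = (r:ℝ) * (B₂ / 2 * η) := by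
          rw [Finset.sum_const, Finset.card_univ, Fintype.card_fin, nsmul_eq_mul]
  have hdx0 : ‖fderiv ℂ f x - fderiv ℂ f x₀‖ ≤ B₂ * ε := by
    have := hLip x₀ (Metric.mem_ball_self hρ) x hxball
    calc ‖fderiv ℂ f x - fderiv ℂ f x₀‖ ≤ B₂ * ‖x - x₀‖ := this
      _ ≤ B₂ * ε := by gcongr
  -- the Neumann series argument
  set A : (Fin r → ℂ) →L[ℂ] (Fin r → ℂ) := FD r f η x with hA
  set D : (Fin r → ℂ) →L[ℂ] (Fin r → ℂ) := fderiv ℂ f x₀ with hD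
  set t : (Fin r → ℂ) →L[ℂ] (Fin r → ℂ) := 1 - L₀ * A with htdef
  have hDA : ‖D - A‖ ≤ B₂ * ε + (r:ℝ) * (B₂ / 2 * η) := by
    have : D - A = (D - fderiv ℂ f x) + (fderiv ℂ f x - A) := by abel
    rw [this]
    refine (norm_add_le _ _).trans ?_
    have h1 : ‖D - fderiv ℂ f x‖ = ‖fderiv ℂ f x - fderiv ℂ f x₀‖ := by
      rw [← norm_neg]; congr 1; abel
    have h2 : ‖fderiv ℂ f x - A‖ = ‖FD r f η x - fderiv ℂ f x‖ := by
      rw [← norm_neg]; congr 1; rw [hA]; abel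
    rw [h1, h2]
    linarith
  have ht_eq : t = L₀ * (D - A) := by
    rw [htdef, mul_sub]
    have : L₀ * D = 1 := by
      rw [ContinuousLinearMap.mul_def, hL₀l, ContinuousLinearMap.one_def]
    rw [this]
  have htnorm : ‖t‖ ≤ 9 / 16 := by
    rw [ht_eq]
    have h1 : ‖L₀ * (D - A)‖ ≤ ‖L₀‖ * ‖D - A‖ := norm_mul_le _ _
    have h2 : ‖L₀‖ * ‖D - A‖ ≤ B₃ * (B₂ * ε + (r:ℝ) * (B₂ / 2 * η)) := by
      exact mul_le_mul hL₀norm hDA (norm_nonneg _) hB₃0.le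
    refine h1.trans (h2.trans ?_)
    have hT : B₃ * ((r:ℝ) * (B₂ / 2 * η)) ≤ B₂ * (ε / 4) / 2 := by
      have : B₃ * ((r:ℝ) * (B₂ / 2 * η)) = (B₂ / 2) * ((r:ℝ) * η * B₃) := by ring
      rw [this]
      exact mul_le_mul_of_nonneg_left hrη2 (by positivity) |>.trans (by nlinarith)
    nlinarith [mul_nonneg (mul_nonneg hB₂0.le hε.le) (sub_nonneg.mpr hB₃)]
  have ht1 : ‖t‖ < 1 := lt_of_le_of_lt htnorm (by norm_num)
  set uG : ((Fin r → ℂ) →L[ℂ] (Fin r → ℂ))ˣ := Units.oneSub t ht1 with huG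
  have hu0vi : D * L₀ = 1 := by
    rw [ContinuousLinearMap.mul_def, hL₀r, ContinuousLinearMap.one_def]
  have hu0iv : L₀ * D = 1 := by
    rw [ContinuousLinearMap.mul_def, hL₀l, ContinuousLinearMap.one_def]
  set u₀ : ((Fin r → ℂ) →L[ℂ] (Fin r → ℂ))ˣ := ⟨D, L₀, hu0vi, hu0iv⟩ with hu₀
  set uA : ((Fin r → ℂ) →L[ℂ] (Fin r → ℂ))ˣ := u₀ * uG with huA
  have hAval : (uA : (Fin r → ℂ) →L[ℂ] (Fin r → ℂ)) = A := by
    show D * (1 - t) = A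
    have h1t : (1 : (Fin r → ℂ) →L[ℂ] (Fin r → ℂ)) - t = L₀ * A := by
      rw [htdef]; abel
    rw [h1t, ← mul_assoc, hu0vi, one_mul]
  set L : (Fin r → ℂ) →L[ℂ] (Fin r → ℂ) := ↑uA⁻¹ with hL
  refine ⟨L, ?_, ?_, ?_⟩
  · rw [← ContinuousLinearMap.mul_def, ← ContinuousLinearMap.one_def]
    rw [hL, ← hAval]
    exact uA.inv_mul
  · rw [← ContinuousLinearMap.mul_def, ← ContinuousLinearMap.one_def]
    rw [hL, ← hAval]
    exact uA.mul_inv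
  · -- the quantitative estimate
    have hLnorm : ‖L‖ ≤ 16 / 7 * B₃ := by
      have hLeq : L = (↑uG⁻¹ : (Fin r → ℂ) →L[ℂ] (Fin r → ℂ)) * L₀ := by
        rw [hL, huA, mul_inv_rev]
        rfl
      rw [hLeq]
      refine (norm_mul_le _ _).trans ?_
      have hginv : ‖(↑uG⁻¹ : (Fin r → ℂ) →L[ℂ] (Fin r → ℂ))‖ ≤ 16 / 7 := by
        have hsum : (↑uG⁻¹ : (Fin r → ℂ) →L[ℂ] (Fin r → ℂ)) = ∑' n : ℕ, t ^ n := rfl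
        rw [hsum]
        have := tsum_geometric_le_of_norm_lt_one t ht1
        rw [ContinuousLinearMap.one_def, ContinuousLinearMap.norm_id] at this
        have hinv : (1 - ‖t‖)⁻¹ ≤ 16 / 7 := by
          have h716 : (7:ℝ) / 16 ≤ 1 - ‖t‖ := by linarith
          calc (1 - ‖t‖)⁻¹ ≤ ((7:ℝ)/16)⁻¹ := by
                apply inv_anti₀ (by norm_num) h716
            _ = 16 / 7 := by norm_num
        linarith
      exact mul_le_mul hginv hL₀norm (norm_nonneg _) (by norm_num)
    have hLAid : ∀ v, L (A v) = v := by
      intro v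
      have h1 : L * A = 1 := by rw [hL, ← hAval]; exact uA.inv_mul
      have := congrArg (fun (M : (Fin r → ℂ) →L[ℂ] (Fin r → ℂ)) => M v) h1
      simpa [ContinuousLinearMap.mul_def] using this
    have hkey : x + L (f x₀ - f x) - x₀ = L (A (x - x₀) + (f x₀ - f x)) := by
      rw [map_add, hLAid]
      abel
    rw [hkey]
    have hw_eq : A (x - x₀) + (f x₀ - f x)
        = (A - fderiv ℂ f x) (x - x₀) + (f x₀ - f x - fderiv ℂ f x (x₀ - x)) := by
      simp only [ContinuousLinearMap.sub_apply, map_sub]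
      abel
    have hw : ‖A (x - x₀) + (f x₀ - f x)‖
        ≤ (r:ℝ) * (B₂ / 2 * η) * ε + B₂ / 2 * ε ^ 2 := by
      rw [hw_eq]
      refine (norm_add_le _ _).trans ?_
      have h1 : ‖(A - fderiv ℂ f x) (x - x₀)‖ ≤ (r:ℝ) * (B₂ / 2 * η) * ε := by
        calc ‖(A - fderiv ℂ f x) (x - x₀)‖ ≤ ‖A - fderiv ℂ f x‖ * ‖x - x₀‖ :=
              (A - fderiv ℂ f x).le_opNorm _
          _ ≤ ((r:ℝ) * (B₂ / 2 * η)) * ε := by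
              gcongr
      have h2 : ‖f x₀ - f x - fderiv ℂ f x (x₀ - x)‖ ≤ B₂ / 2 * ε ^ 2 := by
        have := htay x hxball x₀ (Metric.mem_ball_self hρ)
        calc ‖f x₀ - f x - fderiv ℂ f x (x₀ - x)‖ ≤ B₂ / 2 * ‖x₀ - x‖ ^ 2 := this
          _ ≤ B₂ / 2 * ε ^ 2 := by
              gcongr
              rw [← norm_neg]
              have : -(x₀ - x) = x - x₀ := by abel
              rw [this]
              exact hx
      linarith
    calc ‖L (A (x - x₀) + (f x₀ - f x))‖
        ≤ ‖L‖ * ‖A (x - x₀) + (f x₀ - f x)‖ := L.le_opNorm _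
      _ ≤ (16 / 7 * B₃) * ((r:ℝ) * (B₂ / 2 * η) * ε + B₂ / 2 * ε ^ 2) := by
          have := norm_nonneg (A (x - x₀) + (f x₀ - f x))
          gcongr
      _ ≤ 2 * B₂ * B₃ * ε ^ 2 := by
          have hT : (r:ℝ) * (B₂ / 2 * η) * ε * B₃ ≤ B₂ / 2 * (ε / 4) * ε := by
            have heq : (r:ℝ) * (B₂ / 2 * η) * ε * B₃ = (B₂ / 2) * ((r:ℝ) * η * B₃) * ε := by
              ring
            rw [heq]
            have h5 : (B₂ / 2) * ((r:ℝ) * η * B₃) ≤ B₂ / 2 * (ε / 4) :=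
              mul_le_mul_of_nonneg_left hrη2 (by positivity)
            nlinarith
          nlinarith [hT, sq_nonneg ε, mul_pos hε hε,
            mul_nonneg (mul_nonneg hB₂0.le (sq_nonneg ε)) (sub_nonneg.mpr hB₃)]
end

section
/- Let r, s ≥ 1, x₀ ∈ ℂ^r, ρ > 0, and let f : D_ρ(x₀) → ℂ^s be an analytic function. Let M ≥ 0 be such that ‖f(x)‖ ≤ M for all x ∈ D_ρ(x₀). Then for every integer n ≥ 0 and every x ∈ D_{ρ/2}(x₀), the n-th derivative of f at x (a symmetric n-multilinear map ℂ^r × ⋯ × ℂ^r → ℂ^s) satisfies ‖dⁿf(x)‖ ≤ (2ⁿ n!/ρⁿ) · C(n+r, r) · M, where C(n+r, r) is the binomial coefficient. -/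
open Metric Set Filter
open scoped Topology

namespace Statement1Aux

variable {F : Type*} [NormedAddCommGroup F] [NormedSpace ℂ F] [CompleteSpace F]

/-- One-variable Cauchy estimate on an open disk. -/
lemma onevar_cauchy {φ : ℂ → F} {R C : ℝ} (hR : 0 < R)
    (hφ : DifferentiableOn ℂ φ (Metric.ball 0 R))
    (hC : ∀ z ∈ Metric.ball (0 : ℂ) R, ‖φ z‖ ≤ C) (m : ℕ) :
    ‖iteratedDeriv m φ 0‖ ≤ m.factorial * C / R ^ m := by
  have hC0 : 0 ≤ C := le_trans (norm_nonneg _) (hC 0 (by simpa using hR))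
  have key : ∀ t : ℝ, 0 < t → t < R →
      ‖iteratedDeriv m φ 0‖ * t ^ m ≤ m.factorial * C := by
    intro t ht htR
    set t' : NNReal := t.toNNReal with ht'
    have hct : (t' : ℝ) = t := Real.coe_toNNReal t ht.le
    have ht'0 : (0 : NNReal) < t' := by
      simpa [ht', Real.toNNReal_pos] using ht
    have hsub : Metric.closedBall (0 : ℂ) t ⊆ Metric.ball 0 R :=
      Metric.closedBall_subset_ball htR
    have hd : DiffContOnCl ℂ φ (Metric.ball (0 : ℂ) t) := by
      constructor
      · exact hφ.mono (Metric.ball_subset_ball htR.le)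
      · refine (hφ.continuousOn).mono ?_
        rw [closure_ball (0:ℂ) ht.ne']
        exact hsub
    have hd' : DiffContOnCl ℂ φ (Metric.ball (0:ℂ) (t' : ℝ)) := by rwa [hct]
    have hps : HasFPowerSeriesOnBall φ (cauchyPowerSeries φ 0 t') 0 t' :=
      hd'.hasFPowerSeriesOnBall (by exact_mod_cast ht'0)
    have heq : (m.factorial : ℕ) • ((cauchyPowerSeries φ 0 (t' : ℝ) m) (fun _ => (1 : ℂ)))
        = iteratedFDeriv ℂ m φ 0 (fun _ => 1) := hps.factorial_smul 1 m
    have hID : iteratedDeriv m φ 0 = iteratedFDeriv ℂ m φ 0 (fun _ => 1) :=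
      iteratedDeriv_eq_iteratedFDeriv
    -- integral bound
    have hint : (∫ θ : ℝ in (0)..2 * Real.pi, ‖φ (circleMap 0 t θ)‖) ≤ 2 * Real.pi * C := by
      have h1 : ∀ θ ∈ Set.Icc (0 : ℝ) (2 * Real.pi), ‖φ (circleMap 0 t θ)‖ ≤ C := by
        intro θ _
        apply hC
        simp only [Metric.mem_ball, dist_zero_right]
        calc ‖circleMap 0 t θ‖ = |t| := by
              simpa using Complex.abs_circleMap_zero t θ
          _ < R := by rwa [abs_of_pos ht]
      have hcont : ContinuousOn (fun θ : ℝ => ‖φ (circleMap 0 t θ)‖)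
          (Set.uIcc 0 (2 * Real.pi)) := by
        apply ContinuousOn.norm
        apply hφ.continuousOn.comp (Continuous.continuousOn (continuous_circleMap 0 t))
        intro θ _
        simp only [Metric.mem_ball, dist_zero_right]
        calc ‖circleMap 0 t θ‖ = |t| := by simpa using Complex.abs_circleMap_zero t θ
          _ < R := by rwa [abs_of_pos ht]
      calc (∫ θ : ℝ in (0)..2 * Real.pi, ‖φ (circleMap 0 t θ)‖)
          ≤ ∫ _ : ℝ in (0)..2 * Real.pi, C := by
            apply intervalIntegral.integral_mono_on Real.two_pi_pos.le
            · exact hcont.intervalIntegrable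
            · exact intervalIntegrable_const
            · exact h1
        _ = 2 * Real.pi * C := by simp [mul_comm]
    have hpm : ‖cauchyPowerSeries φ 0 (t' : ℝ) m‖ ≤ C / t ^ m := by
      refine le_trans (norm_cauchyPowerSeries_le φ 0 (t' : ℝ) m) ?_
      rw [hct]
      have h2pi : (0:ℝ) < 2 * Real.pi := Real.two_pi_pos
      have : (2 * Real.pi)⁻¹ * (∫ θ : ℝ in (0)..2 * Real.pi, ‖φ (circleMap 0 t θ)‖) ≤ C := by
        rw [inv_mul_le_iff₀ h2pi]
        exact hint.trans_eq (by ring)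
      have habs : |t| = t := abs_of_pos ht
      calc ((2 * Real.pi)⁻¹ * ∫ θ : ℝ in (0)..2 * Real.pi, ‖φ (circleMap 0 t θ)‖) * |t|⁻¹ ^ m
          ≤ C * |t|⁻¹ ^ m := by
            apply mul_le_mul_of_nonneg_right this
            positivity
        _ = C / t ^ m := by rw [habs, inv_pow, div_eq_mul_inv]
    have hnorm : ‖iteratedDeriv m φ 0‖ ≤ m.factorial * (C / t ^ m) := by
      rw [hID, ← heq]
      calc ‖(m.factorial : ℕ) • ((cauchyPowerSeries φ 0 (t' : ℝ) m) (fun _ => (1 : ℂ)))‖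
          = (m.factorial : ℝ) * ‖(cauchyPowerSeries φ 0 (t' : ℝ) m) (fun _ => (1 : ℂ))‖ := by
            rw [← Nat.cast_smul_eq_nsmul ℝ, norm_smul, Real.norm_natCast]
        _ ≤ (m.factorial : ℝ) * ‖cauchyPowerSeries φ 0 (t' : ℝ) m‖ := by
            apply mul_le_mul_of_nonneg_left _ (by positivity)
            have := (cauchyPowerSeries φ 0 (t' : ℝ) m).le_opNorm (fun _ => (1 : ℂ))
            simpa using this
        _ ≤ (m.factorial : ℝ) * (C / t ^ m) := by
            apply mul_le_mul_of_nonneg_left hpm (by positivity)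
    calc ‖iteratedDeriv m φ 0‖ * t ^ m ≤ (m.factorial * (C / t ^ m)) * t ^ m :=
          mul_le_mul_of_nonneg_right hnorm (by positivity)
      _ = m.factorial * C := by field_simp
  -- pass to the limit t → R⁻
  have hlim : Tendsto (fun t : ℝ => ‖iteratedDeriv m φ 0‖ * t ^ m) (𝓝[<] R)
      (𝓝 (‖iteratedDeriv m φ 0‖ * R ^ m)) := by
    apply Tendsto.mono_left _ nhdsWithin_le_nhds
    exact (tendsto_const_nhds.mul ((continuous_pow m).tendsto R))
  have hev : ∀ᶠ t in 𝓝[<] R, ‖iteratedDeriv m φ 0‖ * t ^ m ≤ m.factorial * C := by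
    filter_upwards [Ioo_mem_nhdsLT_of_mem (Set.mem_Ioc.2 ⟨half_lt_self hR, le_refl R⟩)] with t ht
    exact key t (lt_trans (half_pos hR) ht.1) ht.2
  have hfin : ‖iteratedDeriv m φ 0‖ * R ^ m ≤ m.factorial * C :=
    le_of_tendsto hlim hev
  rw [le_div_iff₀ (by positivity)]
  exact hfin


section PD

variable {r : ℕ}

/-- Partial derivative in coordinate direction `k`. -/
noncomputable def pd (k : Fin r) (g : (Fin r → ℂ) → F) : (Fin r → ℂ) → F :=
  fun y => fderiv ℂ g y (Pi.single k 1)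

/-- Iterated partial derivatives along a list of coordinate directions
(head is the outermost derivative). -/
noncomputable def pdList (l : List (Fin r)) (g : (Fin r → ℂ) → F) : (Fin r → ℂ) → F :=
  l.foldr pd g

@[simp] lemma pdList_nil (g : (Fin r → ℂ) → F) : pdList [] g = g := rfl

@[simp] lemma pdList_cons (a : Fin r) (l : List (Fin r)) (g : (Fin r → ℂ) → F) :
    pdList (a :: l) g = pd a (pdList l g) := rfl

lemma pdList_append (l₁ l₂ : List (Fin r)) (g : (Fin r → ℂ) → F) :
    pdList (l₁ ++ l₂) g = pdList l₁ (pdList l₂ g) := by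
  simp [pdList, List.foldr_append]

lemma pd_analytic {U : Set (Fin r → ℂ)} {g : (Fin r → ℂ) → F}
    (hg : AnalyticOnNhd ℂ g U) (k : Fin r) : AnalyticOnNhd ℂ (pd k g) U := by
  intro y hy
  have h1 : AnalyticAt ℂ (fderiv ℂ g) y := hg.fderiv y hy
  have h2 : AnalyticAt ℂ ((ContinuousLinearMap.apply ℂ F (Pi.single k (1:ℂ))) ∘ fderiv ℂ g) y :=
    ((ContinuousLinearMap.apply ℂ F (Pi.single k (1:ℂ))).analyticAt _).comp h1
  exact h2

lemma pd_iterate_analytic {U : Set (Fin r → ℂ)} {g : (Fin r → ℂ) → F}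
    (hg : AnalyticOnNhd ℂ g U) (k : Fin r) (m : ℕ) :
    AnalyticOnNhd ℂ ((pd k)^[m] g) U := by
  induction m with
  | zero => simpa using hg
  | succ m ih =>
      rw [Function.iterate_succ_apply']
      exact pd_analytic ih k

lemma pdList_analytic {U : Set (Fin r → ℂ)} {g : (Fin r → ℂ) → F}
    (hg : AnalyticOnNhd ℂ g U) (l : List (Fin r)) :
    AnalyticOnNhd ℂ (pdList l g) U := by
  induction l with
  | nil => simpa using hg
  | cons a l ih => exact pd_analytic ih a

lemma pd_congr {U : Set (Fin r → ℂ)} (hU : IsOpen U) {g₁ g₂ : (Fin r → ℂ) → F}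
    (h : Set.EqOn g₁ g₂ U) (k : Fin r) : Set.EqOn (pd k g₁) (pd k g₂) U := by
  intro y hy
  have : g₁ =ᶠ[𝓝 y] g₂ := Filter.eventuallyEq_of_mem (hU.mem_nhds hy) h
  simp only [pd, this.fderiv_eq]

lemma pd_comm {U : Set (Fin r → ℂ)} (hU : IsOpen U) {g : (Fin r → ℂ) → F}
    (hg : AnalyticOnNhd ℂ g U) (a b : Fin r) :
    Set.EqOn (pd a (pd b g)) (pd b (pd a g)) U := by
  intro y hy
  have hdg : AnalyticOnNhd ℂ (fderiv ℂ g) U := hg.fderiv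
  have h2 : DifferentiableAt ℂ (fderiv ℂ g) y := (hdg y hy).differentiableAt
  set G := fderiv ℂ (fderiv ℂ g) y with hG
  have hcomp : ∀ v : Fin r → ℂ, fderiv ℂ (fun z => fderiv ℂ g z v) y =
      (ContinuousLinearMap.apply ℂ F v).comp G := by
    intro v
    have : HasFDerivAt (fun z => (ContinuousLinearMap.apply ℂ F v) (fderiv ℂ g z))
        ((ContinuousLinearMap.apply ℂ F v).comp G) y :=
      (ContinuousLinearMap.apply ℂ F v).hasFDerivAt.comp y h2.hasFDerivAt
    simpa using this.fderiv
  have hsymm : ∀ v w : Fin r → ℂ, G v w = G w v := by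
    intro v w
    apply second_derivative_symmetric_of_eventually (f := g) (f' := fderiv ℂ g)
    · filter_upwards [hU.mem_nhds hy] with z hz
      exact ((hg z hz).differentiableAt).hasFDerivAt
    · exact h2.hasFDerivAt
  show fderiv ℂ (fun z => fderiv ℂ g z (Pi.single b 1)) y (Pi.single a 1)
      = fderiv ℂ (fun z => fderiv ℂ g z (Pi.single a 1)) y (Pi.single b 1)
  rw [hcomp, hcomp]
  simpa using hsymm (Pi.single a 1) (Pi.single b 1)

lemma pdList_perm {U : Set (Fin r → ℂ)} (hU : IsOpen U) {g : (Fin r → ℂ) → F}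
    (hg : AnalyticOnNhd ℂ g U) {l₁ l₂ : List (Fin r)} (hp : l₁.Perm l₂) :
    Set.EqOn (pdList l₁ g) (pdList l₂ g) U := by
  induction hp with
  | nil => exact fun y _ => rfl
  | cons a h ih => exact pd_congr hU ih a
  | swap a b l => exact pd_comm hU (pdList_analytic hg l) b a
  | trans h₁ h₂ ih₁ ih₂ => exact ih₁.trans ih₂

lemma iteratedFDeriv_eq_pdList {U : Set (Fin r → ℂ)} (hU : IsOpen U)
    {g : (Fin r → ℂ) → F} (hg : AnalyticOnNhd ℂ g U) (n : ℕ) (v : Fin n → Fin r) :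
    Set.EqOn (fun y => iteratedFDeriv ℂ n g y (fun i => Pi.single (v i) 1))
      (pdList (List.ofFn v) g) U := by
  induction n with
  | zero =>
      intro y hy
      simp [iteratedFDeriv_zero_apply, List.ofFn_zero]
  | succ n ih =>
      intro y hy
      have hsucc : iteratedFDeriv ℂ (n+1) g y (fun i => Pi.single (v i) 1) =
          (fderiv ℂ (iteratedFDeriv ℂ n g) y (Pi.single (v 0) 1))
            (fun i : Fin n => Pi.single (v i.succ) 1) := by
        rw [iteratedFDeriv_succ_apply_left]
        rfl
      set w : Fin n → (Fin r → ℂ) := fun i => Pi.single (v i.succ) 1 with hw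
      have hdiff : DifferentiableAt ℂ (iteratedFDeriv ℂ n g) y :=
        ((hg.iteratedFDeriv n) y hy).differentiableAt
      set L := ContinuousMultilinearMap.apply ℂ (fun _ : Fin n => (Fin r → ℂ)) F w with hL
      have hswap : fderiv ℂ (fun z => iteratedFDeriv ℂ n g z w) y =
          L.comp (fderiv ℂ (iteratedFDeriv ℂ n g) y) := by
        have : HasFDerivAt (fun z => L (iteratedFDeriv ℂ n g z))
            (L.comp (fderiv ℂ (iteratedFDeriv ℂ n g) y)) y :=
          L.hasFDerivAt.comp y hdiff.hasFDerivAt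
        exact this.fderiv
      have hcongr : fderiv ℂ (fun z => iteratedFDeriv ℂ n g z w) y =
          fderiv ℂ (pdList (List.ofFn (fun i : Fin n => v i.succ)) g) y := by
        apply Filter.EventuallyEq.fderiv_eq
        exact Filter.eventuallyEq_of_mem (hU.mem_nhds hy)
          (ih (fun i : Fin n => v i.succ))
      calc iteratedFDeriv ℂ (n+1) g y (fun i => Pi.single (v i) 1)
          = (fderiv ℂ (iteratedFDeriv ℂ n g) y (Pi.single (v 0) 1)) w := hsucc
        _ = (L.comp (fderiv ℂ (iteratedFDeriv ℂ n g) y)) (Pi.single (v 0) 1) := by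
            simp [hL]
        _ = fderiv ℂ (fun z => iteratedFDeriv ℂ n g z w) y (Pi.single (v 0) 1) := by
            rw [hswap]
        _ = fderiv ℂ (pdList (List.ofFn (fun i : Fin n => v i.succ)) g) y
              (Pi.single (v 0) 1) := by rw [hcongr]
        _ = pdList (List.ofFn v) g y := by
            rw [List.ofFn_succ]
            rfl


/-- Block estimate: an `m`-fold partial derivative in direction `k` via the
one-variable Cauchy estimate on slices of the polydisk. -/
lemma block_bound {x : Fin r → ℂ} {δ : ℝ} (hδ : 0 < δ) {g : (Fin r → ℂ) → F}
    (hg : AnalyticOnNhd ℂ g (Metric.ball x δ)) {T : Set (Fin r)} {k : Fin r} (hk : k ∈ T)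
    {C : ℝ} (hC : ∀ y ∈ Metric.ball x δ, (∀ i ∉ T, y i = x i) → ‖g y‖ ≤ C) (m : ℕ) :
    ∀ y ∈ Metric.ball x δ, (∀ i ∉ T \ {k}, y i = x i) →
      ‖(pd k)^[m] g y‖ ≤ m.factorial * C / δ ^ m := by
  intro y hy hys
  have hyk : y k = x k := hys k (by simp)
  set e : Fin r → ℂ := Pi.single k 1 with he
  -- the complex line through `y` in direction `e` stays in the ball
  have hline : ∀ z ∈ Metric.ball (0 : ℂ) δ, y + z • e ∈ Metric.ball x δ := by
    intro z hz
    rw [Metric.mem_ball, dist_eq_norm]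
    rw [pi_norm_lt_iff hδ]
    intro i
    rcases eq_or_ne i k with rfl | hik
    · simp only [Pi.add_apply, Pi.sub_apply, Pi.smul_apply, he, Pi.single_eq_same,
        smul_eq_mul, mul_one, hyk]
      simpa [Metric.mem_ball, dist_eq_norm] using hz
    · simp only [Pi.add_apply, Pi.sub_apply, Pi.smul_apply, he, Pi.single_eq_of_ne hik,
        smul_eq_mul, mul_zero, add_zero]
      calc ‖y i - x i‖ ≤ ‖y - x‖ := norm_le_pi_norm (y - x) i
        _ < δ := by rwa [← dist_eq_norm]
  set φ : ℂ → F := fun z => g (y + z • e) with hφdef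
  -- the slices of the iterated partial derivatives
  have hslice : ∀ m : ℕ, ∀ z ∈ Metric.ball (0 : ℂ) δ,
      iteratedDeriv m φ z = ((pd k)^[m] g) (y + z • e) := by
    intro m
    induction m with
    | zero => intro z _; simp [hφdef]
    | succ m ih =>
        intro z hz
        rw [iteratedDeriv_succ]
        have hev : iteratedDeriv m φ =ᶠ[𝓝 z] (fun z' => ((pd k)^[m] g) (y + z' • e)) :=
          Filter.eventuallyEq_of_mem (Metric.isOpen_ball.mem_nhds hz) ih
        rw [hev.deriv_eq]
        have hG : AnalyticOnNhd ℂ ((pd k)^[m] g) (Metric.ball x δ) :=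
          pd_iterate_analytic hg k m
        have hGd : DifferentiableAt ℂ ((pd k)^[m] g) (y + z • e) :=
          (hG _ (hline z hz)).differentiableAt
        have hline' : HasDerivAt (fun z' : ℂ => y + z' • e) e z := by
          simpa using ((hasDerivAt_id z).smul_const e).const_add y
        have : HasDerivAt (fun z' => ((pd k)^[m] g) (y + z' • e))
            (fderiv ℂ ((pd k)^[m] g) (y + z • e) e) z :=
          (hGd.hasFDerivAt).comp_hasDerivAt z hline'
        rw [this.deriv]
        rw [Function.iterate_succ_apply']
        rfl
  -- one-variable Cauchy estimate for φ
  have hφdiff : DifferentiableOn ℂ φ (Metric.ball 0 δ) := by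
    intro z hz
    apply DifferentiableAt.differentiableWithinAt
    have hgd : DifferentiableAt ℂ g (y + z • e) := (hg _ (hline z hz)).differentiableAt
    have hline' : DifferentiableAt ℂ (fun z' : ℂ => y + z' • e) z :=
      (differentiableAt_id.smul_const e).const_add y
    exact hgd.comp z hline'
  have hφC : ∀ z ∈ Metric.ball (0 : ℂ) δ, ‖φ z‖ ≤ C := by
    intro z hz
    apply hC _ (hline z hz)
    intro i hiT
    have hik : i ≠ k := fun h => hiT (h ▸ hk)
    simp only [Pi.add_apply, Pi.smul_apply, he, Pi.single_eq_of_ne hik, smul_eq_mul,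
      mul_zero, add_zero]
    exact hys i (by simp [hiT])
  have := onevar_cauchy hδ hφdiff hφC m
  rw [hslice m 0 (by simpa using hδ)] at this
  simpa using this

/-- Iterated block estimates over a list of distinct coordinates. -/
lemma sorted_bound {x : Fin r → ℂ} {δ : ℝ} (hδ : 0 < δ) (α : Fin r → ℕ) :
    ∀ (l : List (Fin r)), l.Nodup → ∀ (T : Set (Fin r)), (∀ k ∈ l, k ∉ T) →
    ∀ (g : (Fin r → ℂ) → F), AnalyticOnNhd ℂ g (Metric.ball x δ) →
    ∀ (C : ℝ), (∀ y ∈ Metric.ball x δ, (∀ i, i ∉ T → i ∉ l → y i = x i) → ‖g y‖ ≤ C) →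
    ∀ y ∈ Metric.ball x δ, (∀ i ∉ T, y i = x i) →
      ‖pdList (l.flatMap fun k => List.replicate (α k) k) g y‖ ≤
        C * (l.map fun k => ((α k).factorial : ℝ) / δ ^ (α k)).prod := by
  intro l
  induction l with
  | nil =>
      intro _ T _ g _ C hC y hy hyT
      simp only [List.flatMap_nil, pdList_nil, List.map_nil, List.prod_nil, mul_one]
      exact hC y hy (fun i hi _ => hyT i hi)
  | cons k l ih =>
      intro hnd T hdisj g hg C hC y hy hyT
      have hknd : k ∉ l := (List.nodup_cons.1 hnd).1
      have hlnd : l.Nodup := (List.nodup_cons.1 hnd).2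
      -- inner function: blocks for `l`
      set h := pdList (l.flatMap fun k => List.replicate (α k) k) g with hh
      have hIH : ∀ y' ∈ Metric.ball x δ, (∀ i ∉ (insert k T : Set (Fin r)), y' i = x i) →
          ‖h y'‖ ≤ C * (l.map fun k => ((α k).factorial : ℝ) / δ ^ (α k)).prod := by
        apply ih hlnd (insert k T)
        · intro k' hk' 
          simp only [Set.mem_insert_iff]
          push_neg
          exact ⟨fun hkk => hknd (hkk ▸ hk'), hdisj k' (List.mem_cons_of_mem _ hk')⟩
        · exact hg
        · intro y' hy' hcond
          apply hC y' hy'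
          intro i hiT hil
          rcases List.mem_cons.not.1 hil |> fun h' => h' with _
          apply hcond i
          · intro hmem
            rcases Set.mem_insert_iff.1 hmem with rfl | hmem'
            · exact hil List.mem_cons_self
            · exact hiT hmem'
          · intro hmem
            exact hil (List.mem_cons_of_mem _ hmem)
      have hhan : AnalyticOnNhd ℂ h (Metric.ball x δ) := pdList_analytic hg _
      have hblock := block_bound hδ hhan (T := insert k T) (k := k) (Set.mem_insert k T)
        hIH (α k)
      have hfinal : ‖(pd k)^[α k] h y‖ ≤
          (α k).factorial * (C * (l.map fun k => ((α k).factorial : ℝ) / δ ^ (α k)).prod)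
            / δ ^ (α k) := by
        apply hblock y hy
        intro i hi
        rcases eq_or_ne i k with rfl | hik
        · exact hyT i (hdisj i List.mem_cons_self)
        · apply hyT i
          intro hiT
          exact hi (by simp [Set.mem_diff, hik, Set.mem_insert_iff, hiT])
      have hrw : pdList ((k :: l).flatMap fun k => List.replicate (α k) k) g y
          = (pd k)^[α k] h y := by
        have h1 : pdList (List.replicate (α k) k) h = (pd k)^[α k] h := by
          induction (α k) with
          | zero => simp
          | succ m ihm =>
              rw [List.replicate_succ]
              rw [pdList_cons, ihm, ← Function.iterate_succ_apply' (pd k) m h]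
        rw [List.flatMap_cons, pdList_append, ← hh, h1]
      rw [hrw]
      refine hfinal.trans_eq ?_
      rw [List.map_cons, List.prod_cons]
      ring

end PD


section Counting

lemma sum_count_eq_length {R : ℕ} (L : List (Fin R)) :
    ∑ k : Fin R, L.count k = L.length := by
  induction L with
  | nil => simp
  | cons b L ih =>
      simp only [List.count_cons, List.length_cons, Finset.sum_add_distrib, ih]
      congr 1
      simp [Finset.sum_ite_eq', beq_iff_eq]

lemma count_flatMap {R : ℕ} (l : List (Fin R)) (g : Fin R → List (Fin R)) (k : Fin R) :
    (l.flatMap g).count k = (l.map fun b => (g b).count k).sum := by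
  induction l with
  | nil => simp
  | cons b l ih => simp [List.flatMap_cons, List.count_append, ih]

lemma count_flatMap_replicate {R : ℕ} (α : Fin R → ℕ) (k : Fin R) :
    ((List.finRange R).flatMap fun m => List.replicate (α m) m).count k = α k := by
  rw [count_flatMap]
  have h1 : ∀ m : Fin R, (List.replicate (α m) m).count k = if m = k then α m else 0 := by
    intro m
    by_cases h : m = k
    · subst h; simp [List.count_replicate]
    · simp [List.count_replicate, h, Ne.symm h]
  simp only [h1]
  rw [← Fin.sum_univ_def]
  simp

lemma prod_factorial_count_cons {R : ℕ} (a : Fin R) (L : List (Fin R)) :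
    ∏ k : Fin R, ((a :: L).count k).factorial
      = (L.count a + 1) * ∏ k : Fin R, (L.count k).factorial := by
  have hcnt : ∀ k : Fin R, ((a :: L).count k) = L.count k + if a = k then 1 else 0 := by
    intro k
    by_cases h : a = k
    · subst h; simp [List.count_cons]
    · simp [List.count_cons, h, Ne.symm h]
  calc ∏ k : Fin R, ((a :: L).count k).factorial
      = ∏ k : Fin R, (L.count k + if a = k then 1 else 0).factorial := by
        simp only [hcnt]
    _ = (L.count a + 1).factorial * ∏ k ∈ Finset.univ.erase a,
          (L.count k + if a = k then 1 else 0).factorial := by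
        rw [← Finset.mul_prod_erase Finset.univ _ (Finset.mem_univ a)]
        simp
    _ = (L.count a + 1).factorial * ∏ k ∈ Finset.univ.erase a, (L.count k).factorial := by
        congr 1
        apply Finset.prod_congr rfl
        intro k hk
        rw [if_neg (Ne.symm (Finset.mem_erase.1 hk).1), Nat.add_zero]
    _ = (L.count a + 1) * ((L.count a).factorial * ∏ k ∈ Finset.univ.erase a,
          (L.count k).factorial) := by
        rw [Nat.factorial_succ]; ring
    _ = (L.count a + 1) * ∏ k : Fin R, (L.count k).factorial := by
        congr 1
        exact Finset.mul_prod_erase Finset.univ (fun k => (L.count k).factorial)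
          (Finset.mem_univ a)

lemma sum_prod_factorial_count (R : ℕ) :
    ∀ N : ℕ, ∑ v : Fin N → Fin R, ∏ k : Fin R, ((List.ofFn v).count k).factorial
      = R.ascFactorial N := by
  intro N
  induction N with
  | zero =>
      rw [Nat.ascFactorial_zero]
      have h1 : ∀ v : Fin 0 → Fin R, (∏ k : Fin R, ((List.ofFn v).count k).factorial) = 1 := by
        intro v; simp [List.ofFn_zero]
      calc ∑ v : Fin 0 → Fin R, ∏ k : Fin R, ((List.ofFn v).count k).factorial
          = ∑ _v : Fin 0 → Fin R, 1 := Finset.sum_congr rfl (fun v _ => h1 v)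
        _ = 1 := by simp
  | succ N ih =>
      have hequiv := Fintype.sum_equiv (Fin.consEquiv (fun _ : Fin (N+1) => Fin R))
        (fun p => ∏ k : Fin R, ((List.ofFn (Fin.cons p.1 p.2 : Fin (N+1) → Fin R)).count k).factorial)
        (fun v => ∏ k : Fin R, ((List.ofFn v).count k).factorial)
        (fun p => rfl)
      rw [← hequiv, Fintype.sum_prod_type]
      have hterm : ∀ (a : Fin R) (w : Fin N → Fin R),
          ∏ k : Fin R, ((List.ofFn (Fin.cons a w : Fin (N+1) → Fin R)).count k).factorial
            = ((List.ofFn w).count a + 1) * ∏ k : Fin R, ((List.ofFn w).count k).factorial := by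
        intro a w
        have hofn : List.ofFn (Fin.cons a w : Fin (N+1) → Fin R) = a :: List.ofFn w := by
          rw [List.ofFn_succ]
          simp
        rw [hofn, prod_factorial_count_cons]
      calc ∑ a : Fin R, ∑ w : Fin N → Fin R,
            ∏ k : Fin R, ((List.ofFn (Fin.cons a w : Fin (N+1) → Fin R)).count k).factorial
          = ∑ w : Fin N → Fin R, ∑ a : Fin R,
              ((List.ofFn w).count a + 1) * ∏ k : Fin R, ((List.ofFn w).count k).factorial := by
            rw [Finset.sum_comm]
            apply Finset.sum_congr rfl
            intro w _
            apply Finset.sum_congr rfl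
            intro a _
            exact hterm a w
        _ = ∑ w : Fin N → Fin R, (N + R) * ∏ k : Fin R, ((List.ofFn w).count k).factorial := by
            apply Finset.sum_congr rfl
            intro w _
            rw [← Finset.sum_mul]
            congr 1
            rw [Finset.sum_add_distrib, sum_count_eq_length]
            simp [List.length_ofFn]
        _ = (N + R) * ∑ w : Fin N → Fin R, ∏ k : Fin R, ((List.ofFn w).count k).factorial := by
            rw [Finset.mul_sum]
        _ = R.ascFactorial (N + 1) := by
            rw [ih, Nat.ascFactorial_succ]
            ring

lemma ascFactorial_mono_base : ∀ (R N : ℕ), R.ascFactorial N ≤ (R + 1).ascFactorial N := by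
  intro R N
  induction N with
  | zero => simp [Nat.ascFactorial_zero]
  | succ N ih =>
      rw [Nat.ascFactorial_succ, Nat.ascFactorial_succ]
      exact Nat.mul_le_mul (by omega) ih

lemma ascFactorial_le_choose (R N : ℕ) :
    R.ascFactorial N ≤ N.factorial * (N + R).choose R := by
  calc R.ascFactorial N ≤ (R + 1).ascFactorial N := ascFactorial_mono_base R N
    _ = N.factorial * (R + N).choose N := Nat.ascFactorial_eq_factorial_mul_choose R N
    _ = N.factorial * (N + R).choose R := by
        congr 1
        rw [Nat.add_comm R N, ← Nat.choose_symm (Nat.le_add_left R N)]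
        congr 1
        omega

end Counting

section Expansion

variable {r : ℕ}

lemma norm_multilinear_le_sum_basis {n : ℕ}
    (D : ContinuousMultilinearMap ℂ (fun _ : Fin n => (Fin r → ℂ)) F) :
    ‖D‖ ≤ ∑ v : Fin n → Fin r, ‖D (fun i => Pi.single (v i) 1)‖ := by
  apply ContinuousMultilinearMap.opNorm_le_bound
  · exact Finset.sum_nonneg fun v _ => norm_nonneg _
  intro m
  have hexp : D m = ∑ v : Fin n → Fin r,
      (∏ i : Fin n, m i (v i)) • D (fun i => Pi.single (v i) 1) := by
    have hm : ∀ i : Fin n, m i = ∑ j : Fin r, (m i j) • (Pi.single j 1 : Fin r → ℂ) := by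
      intro i
      funext t
      simp [Pi.single_apply, Finset.sum_ite_eq, eq_comm]
    calc D m = D (fun i => ∑ j : Fin r, (m i j) • (Pi.single j 1 : Fin r → ℂ)) := by
          congr 1; funext i; exact hm i
      _ = ∑ v : Fin n → Fin r, D (fun i => (m i (v i)) • (Pi.single (v i) 1 : Fin r → ℂ)) :=
          D.toMultilinearMap.map_sum (fun i j => (m i j) • (Pi.single j 1 : Fin r → ℂ))
      _ = ∑ v : Fin n → Fin r, (∏ i : Fin n, m i (v i)) • D (fun i => Pi.single (v i) 1) := by
          apply Finset.sum_congr rfl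
          intro v _
          exact D.toMultilinearMap.map_smul_univ (fun i => m i (v i))
            (fun i => Pi.single (v i) 1)
  rw [hexp]
  calc ‖∑ v : Fin n → Fin r, (∏ i : Fin n, m i (v i)) • D (fun i => Pi.single (v i) 1)‖
      ≤ ∑ v : Fin n → Fin r, ‖(∏ i : Fin n, m i (v i)) • D (fun i => Pi.single (v i) 1)‖ :=
        norm_sum_le _ _
    _ ≤ ∑ v : Fin n → Fin r, ‖D (fun i => Pi.single (v i) 1)‖ * ∏ i : Fin n, ‖m i‖ := by
        apply Finset.sum_le_sum
        intro v _
        rw [norm_smul]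
        rw [mul_comm]
        apply mul_le_mul_of_nonneg_left _ (norm_nonneg _)
        calc ‖∏ i : Fin n, m i (v i)‖ = ∏ i : Fin n, ‖m i (v i)‖ := norm_prod _ _
          _ ≤ ∏ i : Fin n, ‖m i‖ := by
              apply Finset.prod_le_prod (fun i _ => norm_nonneg _)
              intro i _
              exact norm_le_pi_norm (m i) (v i)
    _ = (∑ v : Fin n → Fin r, ‖D (fun i => Pi.single (v i) 1)‖) * ∏ i : Fin n, ‖m i‖ := by
        rw [Finset.sum_mul]

end Expansion

end Statement1Aux



open Statement1Aux


/- STATEMENT 1: Cauchy estimates on polydisks for the sup norm. ℂ^r and ℂ^s carry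
the sup norm (`Fin r → ℂ`, `Fin s → ℂ` with the Pi norm); `Metric.ball x₀ ρ` is the
open polydisk of radius ρ. `iteratedFDeriv ℂ n f x` is the n-th derivative of `f`
at `x` as a (symmetric) continuous multilinear map, with its operator norm. -/

theorem statement1 (r s : ℕ) (hr : 1 ≤ r) (hs : 1 ≤ s)
    (x₀ : Fin r → ℂ) (ρ : ℝ) (hρ : 0 < ρ)
    (f : (Fin r → ℂ) → (Fin s → ℂ)) (hf : AnalyticOnNhd ℂ f (Metric.ball x₀ ρ))
    (M : ℝ) (hM : 0 ≤ M) (hfM : ∀ x ∈ Metric.ball x₀ ρ, ‖f x‖ ≤ M)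
    (n : ℕ) (x : Fin r → ℂ) (hx : x ∈ Metric.ball x₀ (ρ / 2)) :
    ‖iteratedFDeriv ℂ n f x‖ ≤
      2 ^ n * (n.factorial : ℝ) / ρ ^ n * ((n + r).choose r : ℝ) * M := by
  classical
  set δ : ℝ := ρ / 2 with hδdef
  have hδ : 0 < δ := half_pos hρ
  have hsub : Metric.ball x δ ⊆ Metric.ball x₀ ρ := by
    intro y hy
    rw [Metric.mem_ball] at *
    calc dist y x₀ ≤ dist y x + dist x x₀ := dist_triangle _ _ _
      _ < δ + ρ / 2 := add_lt_add hy hx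
      _ = ρ := by rw [hδdef]; ring
  have hfB : AnalyticOnNhd ℂ f (Metric.ball x δ) := hf.mono hsub
  have hfM' : ∀ y ∈ Metric.ball x δ, ‖f y‖ ≤ M := fun y hy => hfM y (hsub hy)
  have hxball : x ∈ Metric.ball x δ := Metric.mem_ball_self hδ
  -- bound for each tuple of coordinate directions
  have hdir : ∀ v : Fin n → Fin r,
      ‖iteratedFDeriv ℂ n f x (fun i => Pi.single (v i) 1)‖ ≤
        ((∏ k : Fin r, ((List.ofFn v).count k).factorial : ℕ) : ℝ) * (M / δ ^ n) := by
    intro v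
    set α : Fin r → ℕ := fun k => (List.ofFn v).count k with hα
    have hsum : ∑ k : Fin r, α k = n := by
      rw [hα]
      exact (sum_count_eq_length _).trans (by simp)
    have h1 : iteratedFDeriv ℂ n f x (fun i => Pi.single (v i) 1)
        = pdList (List.ofFn v) f x :=
      iteratedFDeriv_eq_pdList Metric.isOpen_ball hfB n v hxball
    have hperm : (List.ofFn v).Perm
        ((List.finRange r).flatMap fun m => List.replicate (α m) m) := by
      rw [List.perm_iff_count]
      intro k
      rw [count_flatMap_replicate]
    have h2 : pdList (List.ofFn v) f x
        = pdList ((List.finRange r).flatMap fun m => List.replicate (α m) m) f x :=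
      pdList_perm Metric.isOpen_ball hfB hperm hxball
    have h3 := sorted_bound hδ α (List.finRange r) (List.nodup_finRange r) ∅ (by simp) f hfB M
      (fun y hy _ => hfM' y hy) x hxball (by simp)
    rw [h1, h2]
    refine h3.trans_eq ?_
    have h4 : ((List.finRange r).map fun k => ((α k).factorial : ℝ) / δ ^ (α k)).prod
        = ∏ k : Fin r, (((α k).factorial : ℝ) / δ ^ (α k)) := (Fin.prod_univ_def _).symm
    rw [h4, Finset.prod_div_distrib, Finset.prod_pow_eq_pow_sum, hsum, ← Nat.cast_prod]
    ring
  -- summing over all direction tuples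
  calc ‖iteratedFDeriv ℂ n f x‖
      ≤ ∑ v : Fin n → Fin r, ‖iteratedFDeriv ℂ n f x (fun i => Pi.single (v i) 1)‖ :=
        norm_multilinear_le_sum_basis _
    _ ≤ ∑ v : Fin n → Fin r,
          ((∏ k : Fin r, ((List.ofFn v).count k).factorial : ℕ) : ℝ) * (M / δ ^ n) :=
        Finset.sum_le_sum fun v _ => hdir v
    _ = ((r.ascFactorial n : ℕ) : ℝ) * (M / δ ^ n) := by
        rw [← Finset.sum_mul, ← Nat.cast_sum, sum_prod_factorial_count]
    _ ≤ ((n.factorial * (n + r).choose r : ℕ) : ℝ) * (M / δ ^ n) := by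
        apply mul_le_mul_of_nonneg_right _ (by positivity)
        exact_mod_cast ascFactorial_le_choose r n
    _ = 2 ^ n * (n.factorial : ℝ) / ρ ^ n * ((n + r).choose r : ℝ) * M := by
        rw [hδdef, div_pow]
        push_cast
        field_simp
end

section
/- Let τ ∈ ℍ and z ∈ ℂ be such that |Im z| < 2 Im τ, and write q = exp(−π Im τ). Then for all b ∈ {0,1}: |θ_{0,b}(z, τ) − 1| < 2q·cosh(2π Im z) + 2q⁴·exp(4π|Im z|)/(1 − q⁵·exp(2π|Im z|)). Moreover, |θ_{1,0}(z, τ)/exp(iπτ/4) − (exp(iπz) + exp(−iπz))| < 2q²·exp(3π|Im z|)/(1 − q⁴·exp(2π|Im z|)). -/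
/- STATEMENT 8: explicit bounds on genus-1 theta functions. -/

/-- The genus-1 theta function of characteristic `(a, b)`. -/
noncomputable def theta1 (a b : ℤ) (z τ : ℂ) : ℂ :=
  ∑' n : ℤ, Complex.exp ((Real.pi : ℂ) * Complex.I * ((n : ℂ) + (a : ℂ) / 2) ^ 2 * τ +
    2 * (Real.pi : ℂ) * Complex.I * ((n : ℂ) + (a : ℂ) / 2) * (z + (b : ℂ) / 2))

open Complex Real in
private lemma abs_cexp_pi_I (u : ℂ) :
    ‖Complex.exp ((Real.pi : ℂ) * Complex.I * u)‖ = Real.exp (-Real.pi * u.im) := by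
  rw [Complex.norm_exp]
  congr 1
  simp [Complex.mul_re, Complex.mul_im]

private lemma geom_tsum_lt {F : ℕ → ℝ} (c r : ℝ) (h0 : ∀ k, 0 ≤ F k)
    (hr0 : 0 ≤ r) (hr1 : r < 1) (hle : ∀ k, F k ≤ c * r ^ k) (hstrict : F 2 < c * r ^ 2) :
    Summable F ∧ ∑' k, F k < c / (1 - r) := by
  have hM : Summable (fun k : ℕ => c * r ^ k) :=
    (summable_geometric_of_lt_one hr0 hr1).mul_left c
  refine ⟨hM.of_nonneg_of_le h0 hle, ?_⟩
  calc ∑' k, F k < ∑' k : ℕ, c * r ^ k :=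
        Summable.tsum_lt_tsum_of_nonneg h0 hle hstrict hM
    _ = c / (1 - r) := by
        rw [tsum_mul_left, tsum_geometric_of_lt_one hr0 hr1, div_eq_mul_inv]

private lemma part1 (z τ : ℂ) (hτ : 0 < τ.im) (hz : |z.im| < 2 * τ.im)
    (q : ℝ) (hq : q = Real.exp (-Real.pi * τ.im)) (b : ℤ) :
    ‖theta1 0 b z τ - 1‖ <
      2 * q * Real.cosh (2 * Real.pi * z.im) +
        2 * q ^ 4 * Real.exp (4 * Real.pi * |z.im|) /
          (1 - q ^ 5 * Real.exp (2 * Real.pi * |z.im|)) := by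
  set t := τ.im with htdef
  set y := z.im with hydef
  set Y := |z.im| with hYdef
  have hπ : (0:ℝ) < Real.pi := Real.pi_pos
  have hy1 : y ≤ Y := le_abs_self _
  have hy2 : -Y ≤ y := neg_abs_le _
  have hY0 : 0 ≤ Y := abs_nonneg _
  -- the terms
  set f : ℤ → ℂ := fun n => Complex.exp ((Real.pi : ℂ) * Complex.I *
      ((n:ℂ)^2 * τ + 2 * (n:ℂ) * z + (n:ℂ) * (b:ℂ))) with hfdef
  have hth : theta1 0 b z τ = ∑' n : ℤ, f n := by
    unfold theta1
    congr 1; funext n; congr 1; push_cast; ring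
  have hNf : ∀ n : ℤ, ‖f n‖ =
      Real.exp (-Real.pi * ((n:ℝ)^2 * t + 2 * (n:ℝ) * y)) := by
    intro n
    rw [hfdef]
    rw [abs_cexp_pi_I]
    congr 1
    have : ((n:ℂ)^2 * τ + 2 * (n:ℂ) * z + (n:ℂ) * (b:ℂ)).im
        = (n:ℝ)^2 * τ.im + 2 * (n:ℝ) * z.im := by
      simp [Complex.add_im, Complex.mul_im, Complex.mul_re, sq]
    rw [this]
  -- basic positivity facts
  have hq0 : 0 < q := hq ▸ Real.exp_pos _
  have hqe : ∀ m : ℕ, q ^ m = Real.exp (-((m:ℝ) * (Real.pi * t))) := by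
    intro m
    rw [hq, ← Real.exp_nat_mul]
    congr 1; ring
  set r : ℝ := q ^ 5 * Real.exp (2 * Real.pi * Y) with hrdef
  have hre : r = Real.exp (-(5 * (Real.pi * t)) + 2 * Real.pi * Y) := by
    rw [hrdef, hqe 5, ← Real.exp_add]; norm_num
  have hr0 : 0 ≤ r := by rw [hre]; positivity
  have hr1 : r < 1 := by
    rw [hre, ← Real.exp_zero]
    apply Real.exp_lt_exp.2
    nlinarith
  -- the series of norms
  set F : ℕ → ℝ := fun k => ‖f (k+1)‖ + ‖f (-(k+1))‖ with hFdef
  have hF0 : ∀ k, 0 ≤ F k := fun k =>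
    add_nonneg (norm_nonneg _) (norm_nonneg _)
  have hFe : ∀ k : ℕ, F k = Real.exp (-Real.pi * (((k:ℝ)+1)^2 * t + 2 * ((k:ℝ)+1) * y))
      + Real.exp (-Real.pi * (((k:ℝ)+1)^2 * t - 2 * ((k:ℝ)+1) * y)) := by
    intro k
    rw [hFdef]
    simp only [hNf]
    push_cast
    ring_nf
  set c : ℝ := 2 * q ^ 4 * Real.exp (4 * Real.pi * Y) with hcdef
  have hce : ∀ j : ℕ, c * r ^ j =
      Real.exp (-(4 * (Real.pi * t)) + 4 * Real.pi * Y + (j:ℝ) * (-(5 * (Real.pi * t)) + 2 * Real.pi * Y))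
      + Real.exp (-(4 * (Real.pi * t)) + 4 * Real.pi * Y + (j:ℝ) * (-(5 * (Real.pi * t)) + 2 * Real.pi * Y)) := by
    intro j
    rw [hcdef, hqe 4, hre, ← Real.exp_nat_mul, Real.exp_add, Real.exp_add]
    push_cast
    ring
  -- tail comparison
  have hjj : ∀ j : ℕ, (0:ℝ) ≤ (j:ℝ) * ((j:ℝ) - 1) := by
    intro j
    rcases Nat.eq_zero_or_pos j with h | h
    · simp [h]
    · have h1 : (1:ℝ) ≤ (j:ℝ) := by exact_mod_cast h
      nlinarith
  have htail_le : ∀ j : ℕ, F (j+1) ≤ c * r ^ j := by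
    intro j
    rw [hFe (j+1), hce j]
    push_cast
    have hj0 : (0:ℝ) ≤ (j:ℝ) := Nat.cast_nonneg j
    apply add_le_add <;>
      (apply Real.exp_le_exp.2
       nlinarith [mul_nonneg (mul_nonneg hπ.le hτ.le) (hjj j),
         mul_nonneg (mul_nonneg hπ.le (by positivity : (0:ℝ) ≤ (j:ℝ)+2)) (by linarith : (0:ℝ) ≤ Y + y),
         mul_nonneg (mul_nonneg hπ.le (by positivity : (0:ℝ) ≤ (j:ℝ)+2)) (by linarith : (0:ℝ) ≤ Y - y)])
  have htail_strict : F (2+1) < c * r ^ 2 := by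
    rw [hFe 3, hce 2]
    push_cast
    apply add_lt_add <;>
      (apply Real.exp_lt_exp.2
       nlinarith [mul_pos hπ hτ, mul_nonneg hπ.le (by linarith : (0:ℝ) ≤ Y + y),
         mul_nonneg hπ.le (by linarith : (0:ℝ) ≤ Y - y)])
  obtain ⟨hTs, hTlt⟩ := geom_tsum_lt c r (fun k => hF0 (k+1)) hr0 hr1 htail_le htail_strict
  have hFs : Summable F := (summable_nat_add_iff 1).1 hTs
  -- summability of each side
  have hS1 : Summable (fun k : ℕ => ‖f (k+1)‖) :=
    hFs.of_nonneg_of_le (fun k => norm_nonneg _)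
      (fun k => le_add_of_nonneg_right (norm_nonneg _))
  have hS2 : Summable (fun k : ℕ => ‖f (-(k+1))‖) :=
    hFs.of_nonneg_of_le (fun k => norm_nonneg _)
      (fun k => le_add_of_nonneg_left (norm_nonneg _))
  have hc1 : Summable (fun k : ℕ => f (k+1)) := by
    apply Summable.of_norm
    simpa only using hS1
  have hc2 : Summable (fun k : ℕ => f (-(k+1))) := by
    apply Summable.of_norm
    simpa only using hS2
  have hf0 : f 0 = 1 := by
    rw [hfdef]; norm_num
  have hdecomp : ∑' n : ℤ, f n = (∑' k : ℕ, f (k+1)) + 1 + ∑' k : ℕ, f (-(k+1)) := by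
    rw [← hf0]
    exact_mod_cast tsum_of_add_one_of_neg_add_one hc1 hc2
  have habs : ‖theta1 0 b z τ - 1‖
      ≤ (∑' k : ℕ, ‖f (k+1)‖) + ∑' k : ℕ, ‖f (-(k+1))‖ := by
    rw [hth, hdecomp]
    have heq : (∑' k : ℕ, f (k+1)) + 1 + (∑' k : ℕ, f (-(k+1))) - 1
        = (∑' k : ℕ, f (k+1)) + ∑' k : ℕ, f (-(k+1)) := by ring
    rw [heq]
    refine (norm_add_le _ _).trans (add_le_add ?_ ?_)
    · refine (norm_tsum_le_tsum_norm ?_).trans_eq ?_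
      · simpa only using hS1
      · simp
    · refine (norm_tsum_le_tsum_norm ?_).trans_eq ?_
      · simpa only using hS2
      · simp
  have hsum : (∑' k : ℕ, ‖f (k+1)‖) + ∑' k : ℕ, ‖f (-(k+1))‖
      = F 0 + ∑' k : ℕ, F (k+1) := by
    rw [← hS1.tsum_add hS2, ← hFdef, hFs.tsum_eq_zero_add]
  have hhead : F 0 = 2 * q * Real.cosh (2 * Real.pi * y) := by
    have hch : 2 * q * Real.cosh (2 * Real.pi * y)
        = Real.exp (-Real.pi * t + -(2 * Real.pi * y)) + Real.exp (-Real.pi * t + 2 * Real.pi * y) := by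
      rw [hq, Real.cosh_eq, Real.exp_add, Real.exp_add]; ring
    rw [hFe 0, hch]
    congr 1 <;> (congr 1; push_cast; ring)
  calc ‖theta1 0 b z τ - 1‖
      ≤ F 0 + ∑' k : ℕ, F (k+1) := habs.trans_eq hsum
    _ < 2 * q * Real.cosh (2 * Real.pi * y) + c / (1 - r) := by
        rw [hhead]; exact add_lt_add_right hTlt _
    _ = _ := by rw [hcdef, hrdef]

set_option maxHeartbeats 1000000 in
private lemma part2 (z τ : ℂ) (hτ : 0 < τ.im) (hz : |z.im| < 2 * τ.im)
    (q : ℝ) (hq : q = Real.exp (-Real.pi * τ.im)) :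
    ‖theta1 1 0 z τ / Complex.exp ((Real.pi : ℂ) * Complex.I * τ / 4) -
        (Complex.exp ((Real.pi : ℂ) * Complex.I * z) +
          Complex.exp (-((Real.pi : ℂ) * Complex.I * z)))‖ <
      2 * q ^ 2 * Real.exp (3 * Real.pi * |z.im|) /
        (1 - q ^ 4 * Real.exp (2 * Real.pi * |z.im|)) := by
  set t := τ.im with htdef
  set y := z.im with hydef
  set Y := |z.im| with hYdef
  have hπ : (0:ℝ) < Real.pi := Real.pi_pos
  have hy1 : y ≤ Y := le_abs_self _
  have hy2 : -Y ≤ y := neg_abs_le _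
  have hY0 : 0 ≤ Y := abs_nonneg _
  set g : ℤ → ℂ := fun n => Complex.exp ((Real.pi : ℂ) * Complex.I *
      (((n:ℂ)^2 + (n:ℂ)) * τ + (2 * (n:ℂ) + 1) * z)) with hgdef
  have hth : theta1 1 0 z τ / Complex.exp ((Real.pi : ℂ) * Complex.I * τ / 4) = ∑' n : ℤ, g n := by
    unfold theta1
    rw [← tsum_div_const]
    congr 1; funext n
    rw [div_eq_iff (Complex.exp_ne_zero _), ← Complex.exp_add]
    congr 1; push_cast; ring
  have hNg : ∀ n : ℤ, ‖g n‖ =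
      Real.exp (-Real.pi * (((n:ℝ)^2 + (n:ℝ)) * t + (2 * (n:ℝ) + 1) * y)) := by
    intro n
    rw [hgdef, abs_cexp_pi_I]
    congr 1
    have : ((((n:ℂ))^2 + (n:ℂ)) * τ + (2 * (n:ℂ) + 1) * z).im
        = ((n:ℝ)^2 + (n:ℝ)) * τ.im + (2 * (n:ℝ) + 1) * z.im := by
      simp [Complex.add_im, Complex.mul_im, Complex.mul_re, sq]
    rw [this]
  have hq0 : 0 < q := hq ▸ Real.exp_pos _
  have hqe : ∀ m : ℕ, q ^ m = Real.exp (-((m:ℝ) * (Real.pi * t))) := by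
    intro m
    rw [hq, ← Real.exp_nat_mul]
    congr 1; ring
  set r : ℝ := q ^ 4 * Real.exp (2 * Real.pi * Y) with hrdef
  have hre : r = Real.exp (-(4 * (Real.pi * t)) + 2 * Real.pi * Y) := by
    rw [hrdef, hqe 4, ← Real.exp_add]; norm_num
  have hr0 : 0 ≤ r := by rw [hre]; positivity
  have hr1 : r < 1 := by
    rw [hre, ← Real.exp_zero]
    apply Real.exp_lt_exp.2
    nlinarith
  set G : ℕ → ℝ := fun k => ‖g (k+1)‖ + ‖g (-(k+2))‖ with hGdef
  have hG0 : ∀ k, 0 ≤ G k := fun k =>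
    add_nonneg (norm_nonneg _) (norm_nonneg _)
  have hGe : ∀ k : ℕ, G k =
      Real.exp (-Real.pi * ((((k:ℝ)+1)*((k:ℝ)+2)) * t + (2*(k:ℝ)+3) * y))
      + Real.exp (-Real.pi * ((((k:ℝ)+1)*((k:ℝ)+2)) * t - (2*(k:ℝ)+3) * y)) := by
    intro k
    rw [hGdef]
    simp only [hNg]
    push_cast
    ring_nf
  set c : ℝ := 2 * q ^ 2 * Real.exp (3 * Real.pi * Y) with hcdef
  have hce : ∀ j : ℕ, c * r ^ j =
      Real.exp (-(2 * (Real.pi * t)) + 3 * Real.pi * Y + (j:ℝ) * (-(4 * (Real.pi * t)) + 2 * Real.pi * Y))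
      + Real.exp (-(2 * (Real.pi * t)) + 3 * Real.pi * Y + (j:ℝ) * (-(4 * (Real.pi * t)) + 2 * Real.pi * Y)) := by
    intro j
    rw [hcdef, hqe 2, hre, ← Real.exp_nat_mul, Real.exp_add, Real.exp_add]
    push_cast
    ring
  have hjj : ∀ j : ℕ, (0:ℝ) ≤ (j:ℝ) * ((j:ℝ) - 1) := by
    intro j
    rcases Nat.eq_zero_or_pos j with h | h
    · simp [h]
    · have h1 : (1:ℝ) ≤ (j:ℝ) := by exact_mod_cast h
      nlinarith
  have htail_le : ∀ j : ℕ, G j ≤ c * r ^ j := by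
    intro j
    rw [hGe j, hce j]
    apply add_le_add <;>
      (apply Real.exp_le_exp.2
       nlinarith [mul_nonneg (mul_nonneg hπ.le hτ.le) (hjj j),
         mul_nonneg (mul_nonneg hπ.le (by positivity : (0:ℝ) ≤ 2*(j:ℝ)+3)) (by linarith : (0:ℝ) ≤ Y + y),
         mul_nonneg (mul_nonneg hπ.le (by positivity : (0:ℝ) ≤ 2*(j:ℝ)+3)) (by linarith : (0:ℝ) ≤ Y - y)])
  have htail_strict : G 2 < c * r ^ 2 := by
    rw [hGe 2, hce 2]
    push_cast
    apply add_lt_add <;>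
      (apply Real.exp_lt_exp.2
       nlinarith [mul_pos hπ hτ, mul_nonneg hπ.le (by linarith : (0:ℝ) ≤ Y + y),
         mul_nonneg hπ.le (by linarith : (0:ℝ) ≤ Y - y)])
  obtain ⟨hGs, hGlt⟩ := geom_tsum_lt c r hG0 hr0 hr1 htail_le htail_strict
  have hS1 : Summable (fun k : ℕ => ‖g (k+1)‖) :=
    hGs.of_nonneg_of_le (fun k => norm_nonneg _)
      (fun k => le_add_of_nonneg_right (norm_nonneg _))
  have hS2 : Summable (fun k : ℕ => ‖g (-(k+2))‖) :=
    hGs.of_nonneg_of_le (fun k => norm_nonneg _)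
      (fun k => le_add_of_nonneg_left (norm_nonneg _))
  have hc1 : Summable (fun k : ℕ => g (k+1)) := by
    apply Summable.of_norm
    simpa only using hS1
  have hc2' : Summable (fun k : ℕ => g (-(k+2))) := by
    apply Summable.of_norm
    simpa only using hS2
  have hc2 : Summable (fun k : ℕ => g (-(k+1))) := by
    apply (summable_nat_add_iff 1).1
    apply hc2'.congr
    intro k
    exact congrArg g (by push_cast; ring)
  have hsplit : ∑' k : ℕ, g (-(k+1)) = g (-1) + ∑' k : ℕ, g (-(k+2)) := by
    rw [hc2.tsum_eq_zero_add]
    have h1 : g (-((0:ℕ)+1)) = g (-1) := congrArg g (by norm_num)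
    rw [h1]
    congr 1
  have hdecomp : ∑' n : ℤ, g n = (∑' k : ℕ, g (k+1)) + g 0 + (g (-1) + ∑' k : ℕ, g (-(k+2))) := by
    rw [← hsplit]
    exact_mod_cast tsum_of_add_one_of_neg_add_one hc1 hc2
  have hg0 : g 0 = Complex.exp ((Real.pi : ℂ) * Complex.I * z) := by
    rw [hgdef]; norm_num
  have hgm1 : g (-1) = Complex.exp (-((Real.pi : ℂ) * Complex.I * z)) := by
    rw [hgdef]
    exact congrArg Complex.exp (by push_cast; ring)
  have habs : ‖theta1 1 0 z τ / Complex.exp ((Real.pi : ℂ) * Complex.I * τ / 4) -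
        (Complex.exp ((Real.pi : ℂ) * Complex.I * z) +
          Complex.exp (-((Real.pi : ℂ) * Complex.I * z)))‖
      ≤ (∑' k : ℕ, ‖g (k+1)‖) + ∑' k : ℕ, ‖g (-(k+2))‖ := by
    rw [hth, hdecomp, ← hg0, ← hgm1]
    have heq : (∑' k : ℕ, g (k+1)) + g 0 + (g (-1) + ∑' k : ℕ, g (-(k+2))) - (g 0 + g (-1))
        = (∑' k : ℕ, g (k+1)) + ∑' k : ℕ, g (-(k+2)) := by ring
    rw [heq]
    refine (norm_add_le _ _).trans (add_le_add ?_ ?_)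
    · refine (norm_tsum_le_tsum_norm ?_).trans_eq ?_
      · simpa only using hS1
      · simp
    · refine (norm_tsum_le_tsum_norm ?_).trans_eq ?_
      · simpa only using hS2
      · simp
  have hsum : (∑' k : ℕ, ‖g (k+1)‖) + ∑' k : ℕ, ‖g (-(k+2))‖
      = ∑' k : ℕ, G k := by
    rw [← hS1.tsum_add hS2, ← hGdef]
  calc ‖_‖ ≤ ∑' k : ℕ, G k := habs.trans_eq hsum
    _ < c / (1 - r) := hGlt
    _ = _ := by rw [hcdef, hrdef]

theorem statement8 (z τ : ℂ) (hτ : 0 < τ.im) (hz : |z.im| < 2 * τ.im)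
    (q : ℝ) (hq : q = Real.exp (-Real.pi * τ.im)) :
    (∀ b : ℤ, b = 0 ∨ b = 1 →
      ‖theta1 0 b z τ - 1‖ <
        2 * q * Real.cosh (2 * Real.pi * z.im) +
          2 * q ^ 4 * Real.exp (4 * Real.pi * |z.im|) /
            (1 - q ^ 5 * Real.exp (2 * Real.pi * |z.im|))) ∧
    ‖theta1 1 0 z τ / Complex.exp ((Real.pi : ℂ) * Complex.I * τ / 4) -
        (Complex.exp ((Real.pi : ℂ) * Complex.I * z) +
          Complex.exp (-((Real.pi : ℂ) * Complex.I * z)))‖ <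
      2 * q ^ 2 * Real.exp (3 * Real.pi * |z.im|) /
        (1 - q ^ 4 * Real.exp (2 * Real.pi * |z.im|)) :=
  ⟨fun b _ => part1 z τ hτ hz q hq b, part2 z τ hτ hz q hq⟩
end

section
/- Let Θ be the function defined on the set of τ ∈ ℍ where θ_{0,0}(0, τ/2) ≠ 0 by Θ(τ) = θ_{0,1}(0, τ/2)/θ_{0,0}(0, τ/2). Then Θ is analytic on a neighborhood of R₁ and its derivative satisfies |Θ′(τ)| ≤ 125 for every τ ∈ R₁. -/
def R₁ : Set ℂ :=
  {τ | 0 < τ.im ∧ |τ.re| ≤ 1 / 2 ∧ 1 ≤ ‖τ‖ ∧ τ.im ≤ 2}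

/-- The fundamental theta quotient Θ(τ) = θ_{0,1}(0, τ/2)/θ_{0,0}(0, τ/2)
(defined as a total function; it agrees with the intended quotient wherever
θ_{0,0}(0, τ/2) ≠ 0, in particular on a neighborhood of R₁). -/
noncomputable def ThetaQuot (τ : ℂ) : ℂ :=
  theta1 0 1 0 (τ / 2) / theta1 0 0 0 (τ / 2)

open Complex Real Metric

lemma theta1_eq_jacobiTheta₂ (b : ℤ) (w : ℂ) :
    theta1 0 b 0 w = jacobiTheta₂ ((b : ℂ) / 2) w := by
  unfold theta1 jacobiTheta₂ jacobiTheta₂_term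
  congr 1
  funext n
  congr 1
  push_cast
  ring

lemma ThetaQuot_eq :
    ThetaQuot = fun τ : ℂ => jacobiTheta₂ (1 / 2) (τ / 2) / jacobiTheta₂ 0 (τ / 2) := by
  funext τ
  rw [ThetaQuot, theta1_eq_jacobiTheta₂, theta1_eq_jacobiTheta₂]
  norm_num

lemma exp_base_le : rexp (-(Real.pi * 0.365)) ≤ 0.36 := by
  have hp : (3 : ℝ) < Real.pi := Real.pi_gt_three
  have h1 : rexp (-(Real.pi * 0.365)) ≤ rexp (-(10 * 0.1095)) := by
    apply Real.exp_le_exp.2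
    nlinarith
  refine h1.trans ?_
  have h2 : (1.1095 : ℝ) ^ (10 : ℕ) ≤ rexp (0.1095) ^ (10 : ℕ) := by
    apply pow_le_pow_left₀ (by norm_num)
    linarith [Real.add_one_le_exp (0.1095 : ℝ)]
  have h3 : rexp ((10 : ℕ) * (0.1095 : ℝ)) = rexp (0.1095) ^ (10 : ℕ) :=
    Real.exp_nat_mul _ 10
  have h4 : (25 / 9 : ℝ) ≤ rexp (10 * 0.1095) := by
    have : (25 / 9 : ℝ) ≤ (1.1095 : ℝ) ^ (10 : ℕ) := by norm_num
    calc (25 / 9 : ℝ) ≤ (1.1095 : ℝ) ^ (10 : ℕ) := this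
      _ ≤ rexp (0.1095) ^ (10 : ℕ) := h2
      _ = rexp ((10 : ℕ) * (0.1095 : ℝ)) := h3.symm
      _ = rexp (10 * 0.1095) := by norm_num
  rw [Real.exp_neg]
  rw [inv_le_comm₀ (Real.exp_pos _) (by norm_num)]
  calc ((0.36 : ℝ))⁻¹ = 25 / 9 := by norm_num
    _ ≤ rexp (10 * 0.1095) := h4

/-- The majorant function for the theta series tail. -/
noncomputable def majg (n : ℤ) : ℝ :=
  if n = 0 then 0 else (0.36 : ℝ) ^ (2 * n.natAbs - 1)

lemma majg_hasSum : HasSum majg (225 / 272) := by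
  have hgeo : HasSum (fun n : ℕ => (0.36 : ℝ) * ((0.36 : ℝ) ^ 2) ^ n)
      ((0.36 : ℝ) * (1 - (0.36 : ℝ) ^ 2)⁻¹) :=
    (hasSum_geometric_of_lt_one (by norm_num) (by norm_num)).mul_left _
  have hval : (0.36 : ℝ) * (1 - (0.36 : ℝ) ^ 2)⁻¹ = 225 / 544 := by norm_num
  have hterm : ∀ n : ℕ, (0.36 : ℝ) * ((0.36 : ℝ) ^ 2) ^ n = (0.36 : ℝ) ^ (2 * n + 1) := by
    intro n
    rw [← pow_mul, pow_succ, mul_comm]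
  have hgeo' : HasSum (fun n : ℕ => (0.36 : ℝ) ^ (2 * n + 1)) (225 / 544) := by
    rw [← hval]
    exact hgeo.congr_fun fun n => (hterm n).symm
  have hneg : HasSum (fun n : ℕ => majg (-(n + 1))) (225 / 544) := by
    refine hgeo'.congr_fun fun n => ?_
    have h1 : ((-((n : ℤ) + 1))).natAbs = n + 1 := by omega
    rw [majg, if_neg (by omega), h1, show 2 * (n + 1) - 1 = 2 * n + 1 from by omega]
  have hpos : HasSum (fun n : ℕ => majg n) (225 / 544) := by
    rw [← hasSum_nat_add_iff' 1]
    have h0 : ∑ i ∈ Finset.range 1, majg i = 0 := by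
      simp [majg]
    rw [h0, sub_zero]
    refine hgeo'.congr_fun fun n => ?_
    have h1 : ((n + 1 : ℕ) : ℤ).natAbs = n + 1 := by omega
    rw [majg, if_neg (by omega), h1, show 2 * (n + 1) - 1 = 2 * n + 1 from by omega]
  have h := hpos.of_nat_of_neg_add_one hneg
  convert h using 1
  norm_num

lemma theta_tail_bound {z w : ℂ} (hz : z.im = 0) (hw : (0.365 : ℝ) ≤ w.im) :
    ‖jacobiTheta₂ z w - 1‖ ≤ 225 / 272 := by
  have hw0 : 0 < w.im := lt_of_lt_of_le (by norm_num) hw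
  have hsum := hasSum_jacobiTheta₂_term z hw0
  have h0 : jacobiTheta₂_term 0 z w = 1 := by
    simp [jacobiTheta₂_term]
  have hsum' : HasSum (Function.update (fun n => jacobiTheta₂_term n z w) 0 0)
      (jacobiTheta₂ z w - 1) := by
    have := hsum.update 0 (0 : ℂ)
    rw [h0] at this
    convert this using 1
    · rfl
    ring
  -- pointwise norm bound
  have hbd : ∀ n : ℤ, ‖Function.update (fun n => jacobiTheta₂_term n z w) 0 0 n‖ ≤ majg n := by
    intro n
    rcases eq_or_ne n 0 with rfl | hn
    · simp [majg]
    · rw [Function.update_of_ne hn, majg, if_neg hn]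
      rw [norm_jacobiTheta₂_term, hz]
      have hk : (1 : ℕ) ≤ n.natAbs := Int.natAbs_pos.mpr hn
      set k : ℕ := 2 * n.natAbs - 1 with hkdef
      have hk2 : (k : ℝ) ≤ (n : ℝ) ^ 2 := by
        have h1 : (k : ℤ) ≤ n ^ 2 := by
          have : (n.natAbs : ℤ) ^ 2 = n ^ 2 := by
            rw [← Int.natAbs_sq n]
          rw [← this]
          have hna : (1 : ℤ) ≤ (n.natAbs : ℤ) := by exact_mod_cast hk
          have : (k : ℤ) = 2 * (n.natAbs : ℤ) - 1 := by
            rw [hkdef]; push_cast [Nat.cast_sub (by omega : 1 ≤ 2 * n.natAbs)]; ring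
          nlinarith
        exact_mod_cast h1
      have hstep : rexp (-Real.pi * n ^ 2 * w.im - 2 * Real.pi * n * 0) ≤
          rexp ((k : ℕ) * (-(Real.pi * 0.365))) := by
        apply Real.exp_le_exp.2
        have hpi := Real.pi_pos
        have hn2 : (0 : ℝ) ≤ (n : ℝ) ^ 2 := sq_nonneg _
        have hkn : (0 : ℝ) ≤ (k : ℝ) := Nat.cast_nonneg _
        nlinarith [mul_le_mul_of_nonneg_left hw (mul_nonneg hpi.le hn2),
          mul_le_mul_of_nonneg_right hk2 (mul_pos hpi (by norm_num : (0:ℝ) < 0.365)).le]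
      refine hstep.trans ?_
      rw [Real.exp_nat_mul]
      exact pow_le_pow_left₀ (Real.exp_nonneg _) exp_base_le k
  have hgsum := majg_hasSum
  have hsummable : Summable (fun n => ‖Function.update (fun n => jacobiTheta₂_term n z w) 0 0 n‖) :=
    Summable.of_nonneg_of_le (fun n => norm_nonneg _) hbd hgsum.summable
  calc ‖jacobiTheta₂ z w - 1‖
      = ‖∑' n : ℤ, Function.update (fun n => jacobiTheta₂_term n z w) 0 0 n‖ := by
        rw [hsum'.tsum_eq]
    _ ≤ ∑' n : ℤ, ‖Function.update (fun n => jacobiTheta₂_term n z w) 0 0 n‖ :=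
        norm_tsum_le_tsum_norm hsummable
    _ ≤ ∑' n : ℤ, majg n := Summable.tsum_le_tsum hbd hsummable hgsum.summable
    _ = 225 / 272 := hgsum.tsum_eq

lemma im_half (τ : ℂ) : (τ / 2).im = τ.im / 2 := by
  have : (τ / 2) = τ / ((2 : ℝ) : ℂ) := by norm_num
  rw [this, Complex.div_ofReal_im]

lemma den_lower' {τ : ℂ} (hτ : (0.73 : ℝ) ≤ τ.im) :
    (47 / 272 : ℝ) ≤ ‖jacobiTheta₂ 0 (τ / 2)‖ := by
  have hb : ‖jacobiTheta₂ 0 (τ / 2) - 1‖ ≤ 225 / 272 :=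
    theta_tail_bound (by simp) (by rw [im_half]; linarith)
  have h1 : (1 : ℝ) - ‖jacobiTheta₂ 0 (τ / 2)‖ ≤ ‖jacobiTheta₂ 0 (τ / 2) - 1‖ := by
    calc (1 : ℝ) - ‖jacobiTheta₂ 0 (τ / 2)‖ = ‖(1 : ℂ)‖ - ‖jacobiTheta₂ 0 (τ / 2)‖ := by
          rw [norm_one]
      _ ≤ ‖(1 : ℂ) - jacobiTheta₂ 0 (τ / 2)‖ := norm_sub_norm_le _ _
      _ = ‖jacobiTheta₂ 0 (τ / 2) - 1‖ := by rw [norm_sub_rev]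
  linarith

lemma num_upper {τ : ℂ} (hτ : (0.73 : ℝ) ≤ τ.im) :
    ‖jacobiTheta₂ (1 / 2) (τ / 2)‖ ≤ 497 / 272 := by
  have hb : ‖jacobiTheta₂ (1 / 2) (τ / 2) - 1‖ ≤ 225 / 272 :=
    theta_tail_bound (by norm_num) (by rw [im_half]; linarith)
  calc ‖jacobiTheta₂ (1 / 2) (τ / 2)‖
      = ‖(jacobiTheta₂ (1 / 2) (τ / 2) - 1) + 1‖ := by rw [sub_add_cancel]
    _ ≤ ‖jacobiTheta₂ (1 / 2) (τ / 2) - 1‖ + ‖(1 : ℂ)‖ := norm_add_le _ _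
    _ ≤ 225 / 272 + 1 := by rw [norm_one]; linarith
    _ = 497 / 272 := by norm_num

lemma quot_bound {τ : ℂ} (hτ : (0.73 : ℝ) ≤ τ.im) : ‖ThetaQuot τ‖ ≤ 497 / 47 := by
  rw [ThetaQuot_eq]
  simp only [norm_div]
  have hd := den_lower' hτ
  have hn := num_upper hτ
  have hdpos : (0 : ℝ) < ‖jacobiTheta₂ 0 (τ / 2)‖ := lt_of_lt_of_le (by norm_num) hd
  rw [div_le_iff₀ hdpos]
  calc ‖jacobiTheta₂ (1 / 2) (τ / 2)‖ ≤ 497 / 272 := hn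
    _ = 497 / 47 * (47 / 272) := by norm_num
    _ ≤ 497 / 47 * ‖jacobiTheta₂ 0 (τ / 2)‖ := by
        apply mul_le_mul_of_nonneg_left hd (by norm_num)

lemma diffAt_ThetaQuot {τ : ℂ} (hτ : (0.73 : ℝ) < τ.im) :
    DifferentiableAt ℂ ThetaQuot τ := by
  rw [ThetaQuot_eq]
  have hhalf : 0 < (τ / 2).im := by rw [im_half]; linarith
  have hden : jacobiTheta₂ 0 (τ / 2) ≠ 0 := by
    intro h
    have := den_lower' hτ.le
    rw [h, norm_zero] at this
    norm_num at this
  have hdiv : DifferentiableAt ℂ (fun w : ℂ => w / 2) τ := (differentiableAt_id.div_const 2)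
  exact DifferentiableAt.div
    ((differentiableAt_jacobiTheta₂_snd (1 / 2) hhalf).comp τ hdiv :)
    ((differentiableAt_jacobiTheta₂_snd 0 hhalf).comp τ hdiv :) hden

lemma R₁_im {τ : ℂ} (hτ : τ ∈ R₁) : (0.86 : ℝ) ≤ τ.im := by
  obtain ⟨h1, h2, h3, h4⟩ := hτ
  have habs : (1 : ℝ) ≤ τ.re ^ 2 + τ.im ^ 2 := by
    have := Complex.sq_norm τ
    have h3' : (1 : ℝ) ≤ ‖τ‖ ^ 2 := by nlinarith [norm_nonneg τ]
    rw [this] at h3'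
    simpa [Complex.normSq_apply, sq] using h3'
  have hre : τ.re ^ 2 ≤ 1 / 4 := by
    have := abs_le.1 h2
    nlinarith [this.1, this.2]
  nlinarith

theorem statement11 :
    AnalyticOnNhd ℂ ThetaQuot R₁ ∧
    ∀ τ ∈ R₁, ‖deriv ThetaQuot τ‖ ≤ 125 := by
  have hopen : IsOpen {τ : ℂ | (0.73 : ℝ) < τ.im} :=
    isOpen_lt continuous_const Complex.continuous_im
  have hsub : R₁ ⊆ {τ : ℂ | (0.73 : ℝ) < τ.im} := fun τ hτ => by
    have := R₁_im hτ
    simp only [Set.mem_setOf_eq]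
    linarith
  constructor
  · refine AnalyticOnNhd.mono ?_ hsub
    exact (DifferentiableOn.analyticOnNhd
      (fun τ hτ => (diffAt_ThetaQuot hτ).differentiableWithinAt) hopen)
  · intro τ hτ
    have him := R₁_im hτ
    have hball : ∀ w ∈ closedBall τ (1 / 8), (0.73 : ℝ) < w.im := by
      intro w hw
      rw [mem_closedBall] at hw
      have : |(w - τ).im| ≤ ‖w - τ‖ := Complex.abs_im_le_norm _
      rw [Complex.sub_im] at this
      have hd : ‖w - τ‖ = dist w τ := (dist_eq_norm _ _).symm
      have := (abs_le.1 this).1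
      rw [hd] at this
      linarith
    have hd : DiffContOnCl ℂ ThetaQuot (ball τ (1 / 8)) := by
      have hcl : DifferentiableOn ℂ ThetaQuot (closure (ball τ (1 / 8))) := by
        rw [closure_ball τ (by norm_num : (1 / 8 : ℝ) ≠ 0)]
        exact fun w hw => (diffAt_ThetaQuot (hball w hw)).differentiableWithinAt
      exact hcl.diffContOnCl
    have hC : ∀ w ∈ sphere τ (1 / 8), ‖ThetaQuot w‖ ≤ 497 / 47 := by
      intro w hw
      exact quot_bound (hball w (sphere_subset_closedBall hw)).le
    have key := Complex.norm_deriv_le_of_forall_mem_sphere_norm_le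
      (by norm_num : (0 : ℝ) < 1 / 8) hd hC
    calc ‖deriv ThetaQuot τ‖ ≤ (497 / 47) / (1 / 8) := key
      _ ≤ 125 := by norm_num
end

section
/- Let (z, τ) ∈ S₁ and let a, b ∈ {0,1}. Then the following inequalities hold: |θ_{0,b}(z, τ/2) − 1| < 0.68; |θ_{a,b}(z, τ)| < 1.17; and |θ_{1,0}(z, τ)| > 0.37. -/
/-- The set S₁ of reduced arguments (z, τ). -/
def S₁ : Set (ℂ × ℂ) :=
  {p | p.2 ∈ R₁ ∧ |p.1.im| ≤ p.2.im / 8 ∧ |p.1.re| ≤ 1 / 8}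

noncomputable def Gt (z τ : ℂ) (d x : ℝ) : ℂ :=
  Complex.exp ((Real.pi : ℂ) * Complex.I * (x : ℂ) ^ 2 * τ +
    2 * (Real.pi : ℂ) * Complex.I * (x : ℂ) * (z + (d : ℂ)))

lemma Gt_abs (z τ : ℂ) (d x : ℝ) :
    ‖Gt z τ d x‖ = Real.exp (-(Real.pi * x ^ 2 * τ.im) - 2 * Real.pi * x * z.im) := by
  rw [Gt, Complex.norm_exp]
  congr 1
  simp [Complex.add_re, Complex.mul_re, Complex.mul_im, Complex.I_re, Complex.I_im,
    Complex.ofReal_re, Complex.ofReal_im, pow_two]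
  ring

lemma pair_bound (t y c t' : ℝ) (ht : 0 < t) (hy : |y| ≤ t / 8) (hc : 0 ≤ c)
    (k l : ℕ) (hk : (k : ℝ) * (t / 8) ≤ c ^ 2 * t' - c * (t / 4))
    (hl : (l : ℝ) * (t / 8) ≤ c ^ 2 * t' + c * (t / 4)) :
    Real.exp (-(Real.pi * c ^ 2 * t') - 2 * Real.pi * c * y) +
      Real.exp (-(Real.pi * c ^ 2 * t') + 2 * Real.pi * c * y) ≤
    (Real.exp (-(Real.pi * t / 8))) ^ k + (Real.exp (-(Real.pi * t / 8))) ^ l := by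
  have hpi := Real.pi_pos
  have h1 : Real.exp (2 * Real.pi * c * y) + Real.exp (-(2 * Real.pi * c * y)) ≤
      Real.exp (Real.pi * c * (t / 4)) + Real.exp (-(Real.pi * c * (t / 4))) := by
    have hcosh : Real.cosh (2 * Real.pi * c * y) ≤ Real.cosh (Real.pi * c * (t / 4)) := by
      rw [Real.cosh_le_cosh]
      rw [_root_.abs_of_nonneg (by positivity : (0:ℝ) ≤ Real.pi * c * (t / 4))]
      calc |2 * Real.pi * c * y| = 2 * Real.pi * c * |y| := by
            rw [abs_mul, _root_.abs_of_nonneg (by positivity : (0:ℝ) ≤ 2 * Real.pi * c)]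
        _ ≤ 2 * Real.pi * c * (t / 8) := by
            apply mul_le_mul_of_nonneg_left hy (by positivity)
        _ = Real.pi * c * (t / 4) := by ring
    rw [Real.cosh_eq, Real.cosh_eq] at hcosh
    linarith
  have key : ∀ u : ℝ, ∀ m : ℕ, ((m : ℝ) * (t / 8) ≤ c ^ 2 * t' - u) →
      Real.exp (-(Real.pi * c ^ 2 * t') + Real.pi * u) ≤ (Real.exp (-(Real.pi * t / 8))) ^ m := by
    intro u m hm
    rw [← Real.exp_nat_mul]
    apply Real.exp_le_exp.2
    have : (m : ℝ) * (Real.pi * t / 8) ≤ Real.pi * (c ^ 2 * t' - u) := by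
      have := mul_le_mul_of_nonneg_left hm hpi.le
      nlinarith
    nlinarith
  have hk' := key (c * (t / 4)) k hk
  have hl' := key (-(c * (t / 4))) l (by linarith)
  calc Real.exp (-(Real.pi * c ^ 2 * t') - 2 * Real.pi * c * y) +
        Real.exp (-(Real.pi * c ^ 2 * t') + 2 * Real.pi * c * y)
      = Real.exp (-(Real.pi * c ^ 2 * t')) *
          (Real.exp (2 * Real.pi * c * y) + Real.exp (-(2 * Real.pi * c * y))) := by
        rw [mul_add, ← Real.exp_add, ← Real.exp_add]; ring_nf
    _ ≤ Real.exp (-(Real.pi * c ^ 2 * t')) *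
          (Real.exp (Real.pi * c * (t / 4)) + Real.exp (-(Real.pi * c * (t / 4)))) := by
        apply mul_le_mul_of_nonneg_left h1 (Real.exp_pos _).le
    _ = Real.exp (-(Real.pi * c ^ 2 * t') + Real.pi * (c * (t / 4))) +
        Real.exp (-(Real.pi * c ^ 2 * t') + Real.pi * (-(c * (t / 4)))) := by
        rw [mul_add, ← Real.exp_add, ← Real.exp_add]; ring_nf
    _ ≤ _ := add_le_add hk' hl'

lemma geo_bound (s : ℝ) (hs0 : 0 < s) (hs1 : s < 1) (K L : ℕ → ℕ) (m : ℕ) (hm : m ≠ 0)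
    (hK : ∀ n, K n + m ≤ K (n + 1)) (hL : ∀ n, L n + m ≤ L (n + 1))
    (g h : ℕ → ℂ) (hgh : ∀ n, ‖g n‖ + ‖h n‖ ≤ s ^ K n + s ^ L n) :
    Summable g ∧ Summable h ∧
      ‖∑' n, g n‖ + ‖∑' n, h n‖ ≤
        (s ^ K 0 + s ^ L 0) / (1 - s ^ m) := by
  set r : ℝ := s ^ m with hr
  have hr0 : 0 < r := pow_pos hs0 m
  have hr1 : r < 1 := pow_lt_one₀ hs0.le hs1 hm
  set f : ℕ → ℝ := fun n => s ^ K n + s ^ L n with hf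
  have hfnn : ∀ n, 0 ≤ f n := fun n => by positivity
  have hstep : ∀ n, f (n + 1) ≤ r * f n := by
    intro n
    have h1 : s ^ K (n + 1) ≤ r * s ^ K n := by
      calc s ^ K (n + 1) ≤ s ^ (K n + m) :=
            pow_le_pow_of_le_one hs0.le hs1.le (hK n)
        _ = r * s ^ K n := by rw [pow_add]; ring
    have h2 : s ^ L (n + 1) ≤ r * s ^ L n := by
      calc s ^ L (n + 1) ≤ s ^ (L n + m) :=
            pow_le_pow_of_le_one hs0.le hs1.le (hL n)
        _ = r * s ^ L n := by rw [pow_add]; ring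
    calc f (n + 1) = s ^ K (n + 1) + s ^ L (n + 1) := rfl
      _ ≤ r * s ^ K n + r * s ^ L n := add_le_add h1 h2
      _ = r * f n := by rw [hf]; ring
  have hfb : ∀ n, f n ≤ f 0 * r ^ n := by
    intro n
    induction n with
    | zero => simp
    | succ n ih =>
      calc f (n + 1) ≤ r * f n := hstep n
        _ ≤ r * (f 0 * r ^ n) := by apply mul_le_mul_of_nonneg_left ih hr0.le
        _ = f 0 * r ^ (n + 1) := by ring
  have hgeo : Summable (fun n : ℕ => f 0 * r ^ n) :=
    (summable_geometric_of_lt_one hr0.le hr1).mul_left _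
  have hfs : Summable f := hgeo.of_nonneg_of_le hfnn hfb
  have hgn : ∀ n, ‖g n‖ ≤ f n := by
    intro n
    have := hgh n
    have h0 : (0:ℝ) ≤ ‖h n‖ := norm_nonneg _
    have hfn : f n = s ^ K n + s ^ L n := rfl
    linarith
  have hhn : ∀ n, ‖h n‖ ≤ f n := by
    intro n
    have := hgh n
    have h0 : (0:ℝ) ≤ ‖g n‖ := norm_nonneg _
    have hfn : f n = s ^ K n + s ^ L n := rfl
    linarith
  have hgs : Summable g := Summable.of_norm_bounded hfs hgn
  have hhs : Summable h := Summable.of_norm_bounded hfs hhn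
  refine ⟨hgs, hhs, ?_⟩
  have hgns : Summable (fun n => ‖g n‖) := hfs.of_nonneg_of_le (fun n => norm_nonneg _) hgn
  have hhns : Summable (fun n => ‖h n‖) := hfs.of_nonneg_of_le (fun n => norm_nonneg _) hhn
  have b1 : ‖∑' n, g n‖ ≤ ∑' n, ‖g n‖ := by
    exact norm_tsum_le_tsum_norm hgns
  have b2 : ‖∑' n, h n‖ ≤ ∑' n, ‖h n‖ := by
    exact norm_tsum_le_tsum_norm hhns
  have b3 : ∑' n, ‖g n‖ + ∑' n, ‖h n‖ ≤ ∑' n, f n := by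
    rw [← Summable.tsum_add hgns hhns]
    apply Summable.tsum_le_tsum _ (hgns.add hhns) hfs
    intro n
    have := hgh n
    have hfn : f n = s ^ K n + s ^ L n := rfl
    linarith
  have b4 : ∑' n, f n ≤ f 0 * (1 - r)⁻¹ := by
    calc ∑' n, f n ≤ ∑' n, f 0 * r ^ n := Summable.tsum_le_tsum hfb hfs hgeo
      _ = f 0 * (1 - r)⁻¹ := by
          rw [tsum_mul_left, tsum_geometric_of_lt_one hr0.le hr1]
  have : f 0 * (1 - r)⁻¹ = (s ^ K 0 + s ^ L 0) / (1 - r) := by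
    rw [div_eq_mul_inv]
  linarith

lemma tail_bound (z τ' : ℂ) (d t : ℝ) (ht : 0 < t) (hy : |z.im| ≤ t / 8)
    (c : ℕ → ℝ) (hc : ∀ n, 0 ≤ c n)
    (K L : ℕ → ℕ) (m : ℕ) (hm : m ≠ 0)
    (hK : ∀ n, K n + m ≤ K (n + 1)) (hL : ∀ n, L n + m ≤ L (n + 1))
    (hk : ∀ n, (K n : ℝ) * (t / 8) ≤ (c n) ^ 2 * τ'.im - c n * (t / 4))
    (hl : ∀ n, (L n : ℝ) * (t / 8) ≤ (c n) ^ 2 * τ'.im + c n * (t / 4)) :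
    Summable (fun n : ℕ => Gt z τ' d (c n)) ∧ Summable (fun n : ℕ => Gt z τ' d (-(c n))) ∧
      ‖∑' n, Gt z τ' d (c n)‖ + ‖∑' n, Gt z τ' d (-(c n))‖ ≤
        ((Real.exp (-(Real.pi * t / 8))) ^ K 0 + (Real.exp (-(Real.pi * t / 8))) ^ L 0) /
          (1 - (Real.exp (-(Real.pi * t / 8))) ^ m) := by
  have hpi := Real.pi_pos
  apply geo_bound _ (Real.exp_pos _) (Real.exp_lt_one_iff.2 (by nlinarith)) K L m hm hK hL
  intro n
  rw [Gt_abs, Gt_abs]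
  have e1 : -(Real.pi * (-(c n)) ^ 2 * τ'.im) - 2 * Real.pi * (-(c n)) * z.im =
      -(Real.pi * (c n) ^ 2 * τ'.im) + 2 * Real.pi * (c n) * z.im := by ring
  rw [e1]
  exact pair_bound t z.im (c n) τ'.im ht hy (hc n) (K n) (L n) (hk n) (hl n)

lemma theta1_decomp (a b : ℤ) (z τ' : ℂ)
    (h1 : Summable fun n : ℕ => Gt z τ' ((b : ℝ) / 2) ((n : ℝ) + (a : ℝ) / 2))
    (h2 : Summable fun n : ℕ => Gt z τ' ((b : ℝ) / 2) (-(((n : ℝ) + 1) - (a : ℝ) / 2))) :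
    theta1 a b z τ' = (∑' n : ℕ, Gt z τ' ((b : ℝ) / 2) ((n : ℝ) + (a : ℝ) / 2)) +
      ∑' n : ℕ, Gt z τ' ((b : ℝ) / 2) (-(((n : ℝ) + 1) - (a : ℝ) / 2)) := by
  have hth : theta1 a b z τ' = ∑' n : ℤ, Gt z τ' ((b : ℝ) / 2) ((n : ℝ) + (a : ℝ) / 2) := by
    unfold theta1 Gt
    congr 1
    funext n
    congr 1
    push_cast
    ring
  have e1 : (fun n : ℕ => Gt z τ' ((b : ℝ) / 2) (((n : ℤ) : ℝ) + (a : ℝ) / 2)) =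
      fun n : ℕ => Gt z τ' ((b : ℝ) / 2) ((n : ℝ) + (a : ℝ) / 2) := by
    funext n; congr 1
  have e2 : (fun n : ℕ => Gt z τ' ((b : ℝ) / 2) (((-((n : ℤ) + 1) : ℤ) : ℝ) + (a : ℝ) / 2)) =
      fun n : ℕ => Gt z τ' ((b : ℝ) / 2) (-(((n : ℝ) + 1) - (a : ℝ) / 2)) := by
    funext n; congr 1; push_cast; ring
  rw [hth, tsum_of_nat_of_neg_add_one]
  · rw [e1, e2]
  · rw [e1]; exact h1
  · rw [e2]; exact h2
lemma a0_decomp (b : ℤ) (z τ' : ℂ) (t : ℝ) (ht : 0 < t) (hy : |z.im| ≤ t / 8)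
    (K L : ℕ → ℕ) (m : ℕ) (hm : m ≠ 0)
    (hK : ∀ n, K n + m ≤ K (n + 1)) (hL : ∀ n, L n + m ≤ L (n + 1))
    (hk : ∀ n : ℕ, (K n : ℝ) * (t / 8) ≤ ((n : ℝ) + 1) ^ 2 * τ'.im - ((n : ℝ) + 1) * (t / 4))
    (hl : ∀ n : ℕ, (L n : ℝ) * (t / 8) ≤ ((n : ℝ) + 1) ^ 2 * τ'.im + ((n : ℝ) + 1) * (t / 4)) :
    ∃ w : ℂ, theta1 0 b z τ' = 1 + w ∧
      ‖w‖ ≤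
        ((Real.exp (-(Real.pi * t / 8))) ^ K 0 + (Real.exp (-(Real.pi * t / 8))) ^ L 0) /
          (1 - (Real.exp (-(Real.pi * t / 8))) ^ m) := by
  set d : ℝ := (b : ℝ) / 2 with hd
  obtain ⟨hg, hh, hbd⟩ := tail_bound z τ' d t ht hy (fun n => (n : ℝ) + 1)
    (fun n => by positivity) K L m hm hK hL hk hl
  have eP : (fun n : ℕ => Gt z τ' d ((n : ℝ) + ((0 : ℤ) : ℝ) / 2)) =
      fun n : ℕ => Gt z τ' d (n : ℝ) := by
    funext n; congr 1; norm_num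
  have eN : (fun n : ℕ => Gt z τ' d (-(((n : ℝ) + 1) - ((0 : ℤ) : ℝ) / 2))) =
      fun n : ℕ => Gt z τ' d (-((n : ℝ) + 1)) := by
    funext n; congr 1; norm_num
  have eS : (fun n : ℕ => Gt z τ' d (((n + 1 : ℕ) : ℝ))) =
      fun n : ℕ => Gt z τ' d ((n : ℝ) + 1) := by
    funext n; congr 1; push_cast; ring
  have hP : Summable (fun n : ℕ => Gt z τ' d (n : ℝ)) := by
    apply (summable_nat_add_iff 1).1
    rw [show (fun n : ℕ => Gt z τ' d (((n + 1 : ℕ) : ℝ))) =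
      fun n : ℕ => Gt z τ' d ((n : ℝ) + 1) from eS]
    exact hg
  have hdec := theta1_decomp 0 b z τ' (by rw [eP]; exact hP) (by rw [eN]; exact hh)
  rw [eP, eN] at hdec
  have hsplit : ∑' n : ℕ, Gt z τ' d (n : ℝ) =
      Gt z τ' d ((0 : ℕ) : ℝ) + ∑' n : ℕ, Gt z τ' d (((n + 1 : ℕ) : ℝ)) :=
    Summable.tsum_eq_zero_add hP
  have h0 : Gt z τ' d ((0 : ℕ) : ℝ) = 1 := by
    simp [Gt]
  refine ⟨(∑' n : ℕ, Gt z τ' d ((n : ℝ) + 1)) + ∑' n : ℕ, Gt z τ' d (-((n : ℝ) + 1)), ?_, ?_⟩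
  · rw [hdec, hsplit, h0, eS, add_assoc]
  · calc ‖(∑' n : ℕ, Gt z τ' d ((n : ℝ) + 1)) +
          ∑' n : ℕ, Gt z τ' d (-((n : ℝ) + 1))‖ ≤
        ‖∑' n : ℕ, Gt z τ' d ((n : ℝ) + 1)‖ +
          ‖∑' n : ℕ, Gt z τ' d (-((n : ℝ) + 1))‖ := norm_add_le _ _
      _ ≤ _ := hbd

lemma a1_decomp (b : ℤ) (z τ' : ℂ) (t : ℝ) (ht : 0 < t) (hy : |z.im| ≤ t / 8)
    (K L : ℕ → ℕ) (m : ℕ) (hm : m ≠ 0)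
    (hK : ∀ n, K n + m ≤ K (n + 1)) (hL : ∀ n, L n + m ≤ L (n + 1))
    (hk : ∀ n : ℕ, (K n : ℝ) * (t / 8) ≤ ((n : ℝ) + 1 / 2) ^ 2 * τ'.im - ((n : ℝ) + 1 / 2) * (t / 4))
    (hl : ∀ n : ℕ, (L n : ℝ) * (t / 8) ≤ ((n : ℝ) + 1 / 2) ^ 2 * τ'.im + ((n : ℝ) + 1 / 2) * (t / 4)) :
    theta1 1 b z τ' = (∑' n : ℕ, Gt z τ' ((b : ℝ) / 2) ((n : ℝ) + 1 / 2)) +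
        ∑' n : ℕ, Gt z τ' ((b : ℝ) / 2) (-((n : ℝ) + 1 / 2)) ∧
      Summable (fun n : ℕ => Gt z τ' ((b : ℝ) / 2) ((n : ℝ) + 1 / 2)) ∧
      Summable (fun n : ℕ => Gt z τ' ((b : ℝ) / 2) (-((n : ℝ) + 1 / 2))) ∧
      ‖∑' n : ℕ, Gt z τ' ((b : ℝ) / 2) ((n : ℝ) + 1 / 2)‖ +
        ‖∑' n : ℕ, Gt z τ' ((b : ℝ) / 2) (-((n : ℝ) + 1 / 2))‖ ≤
        ((Real.exp (-(Real.pi * t / 8))) ^ K 0 + (Real.exp (-(Real.pi * t / 8))) ^ L 0) /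
          (1 - (Real.exp (-(Real.pi * t / 8))) ^ m) := by
  set d : ℝ := (b : ℝ) / 2 with hd
  obtain ⟨hg, hh, hbd⟩ := tail_bound z τ' d t ht hy (fun n => (n : ℝ) + 1 / 2)
    (fun n => by positivity) K L m hm hK hL hk hl
  have eP : (fun n : ℕ => Gt z τ' d ((n : ℝ) + ((1 : ℤ) : ℝ) / 2)) =
      fun n : ℕ => Gt z τ' d ((n : ℝ) + 1 / 2) := by
    funext n; congr 1; norm_num
  have eN : (fun n : ℕ => Gt z τ' d (-(((n : ℝ) + 1) - ((1 : ℤ) : ℝ) / 2))) =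
      fun n : ℕ => Gt z τ' d (-((n : ℝ) + 1 / 2)) := by
    funext n; congr 1; push_cast; ring
  have hdec := theta1_decomp 1 b z τ' (by rw [eP]; exact hg) (by rw [eN]; exact hh)
  rw [eP, eN] at hdec
  exact ⟨hdec, hg, hh, hbd⟩
set_option maxHeartbeats 2000000

theorem statement12 (z τ : ℂ) (h : (z, τ) ∈ S₁)
    (a b : ℤ) (ha : a = 0 ∨ a = 1) (hb : b = 0 ∨ b = 1) :
    ‖theta1 0 b z (τ / 2) - 1‖ < 0.68 ∧
    ‖theta1 a b z τ‖ < 1.17 ∧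
    0.37 < ‖theta1 1 0 z τ‖ := by
  obtain ⟨⟨ht0, htre, htabs, htim⟩, hzim, hzre⟩ := h
  set t : ℝ := τ.im with htdef
  have hpiu := Real.pi_lt_d6
  have hpil := Real.pi_gt_d6
  have hpi0 := Real.pi_pos
  have htre2 : τ.re ^ 2 ≤ 1 / 4 := by
    have h1 := abs_le.1 htre
    nlinarith [h1.1, h1.2]
  have habs2 : (1 : ℝ) ≤ τ.re ^ 2 + t ^ 2 := by
    have h1 : (1 : ℝ) ≤ ‖τ‖ ^ 2 := by nlinarith [norm_nonneg τ]
    rw [Complex.sq_norm, Complex.normSq_apply] at h1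
    nlinarith
  have htl : (0.866 : ℝ) ≤ t := by nlinarith
  set s : ℝ := Real.exp (-(Real.pi * t / 8)) with hsdef
  have hs0 : 0 < s := Real.exp_pos _
  have hsu : s ≤ 0.7121 := by
    have h034 : (0.34 : ℝ) ≤ Real.pi * t / 8 := by nlinarith
    have hsum := Real.sum_le_exp_of_nonneg (by norm_num : (0:ℝ) ≤ 0.34) 4
    have hb1 : (1.404347 : ℝ) ≤ Real.exp 0.34 := by
      refine le_trans ?_ hsum
      norm_num [Finset.sum_range_succ, Nat.factorial]
    have h2 : s ≤ Real.exp (-(0.34 : ℝ)) := Real.exp_le_exp.2 (by linarith)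
    rw [Real.exp_neg] at h2
    have h3 : (Real.exp 0.34)⁻¹ ≤ (1.404347 : ℝ)⁻¹ :=
      inv_anti₀ (by norm_num) hb1
    have h4 : ((1.404347 : ℝ))⁻¹ ≤ 0.7121 := by norm_num
    linarith
  have hs1 : s < 1 := lt_of_le_of_lt hsu (by norm_num)
  have hpow : ∀ k : ℕ, s ^ k ≤ (0.7121 : ℝ) ^ k := fun k => pow_le_pow_left₀ hs0.le hsu k
  have u2 : s ^ 2 ≤ 0.5071 := le_trans (hpow 2) (by norm_num)
  have u3 : s ^ 3 ≤ 0.36110 := le_trans (hpow 3) (by norm_num)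
  have u6 : s ^ 6 ≤ 0.13040 := le_trans (hpow 6) (by norm_num)
  have u10 : s ^ 10 ≤ 0.033529 := le_trans (hpow 10) (by norm_num)
  have u14 : s ^ 14 ≤ 0.008622 := le_trans (hpow 14) (by norm_num)
  have u15 : s ^ 15 ≤ 0.006140 := le_trans (hpow 15) (by norm_num)
  have u21 : s ^ 21 ≤ 0.000801 := le_trans (hpow 21) (by norm_num)
  have u22 : s ^ 22 ≤ 0.000571 := le_trans (hpow 22) (by norm_num)
  have upos : ∀ k : ℕ, 0 < s ^ k := fun k => pow_pos hs0 k
  have hsl : (0.4559 : ℝ) ≤ s := by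
    have hx : Real.pi * t / 8 ≤ 0.785399 := by nlinarith
    have hb6 : Real.exp 0.785399 ≤ 2.1933 := by
      have h6 := Real.exp_bound' (by norm_num : (0:ℝ) ≤ 0.785399)
        (by norm_num : (0.785399 : ℝ) ≤ 1) (by norm_num : 0 < 6)
      refine le_trans h6 ?_
      norm_num [Finset.sum_range_succ, Nat.factorial]
    have h2 : Real.exp (-(0.785399 : ℝ)) ≤ s := Real.exp_le_exp.2 (by linarith)
    rw [Real.exp_neg] at h2
    have h3 : (2.1933 : ℝ)⁻¹ ≤ (Real.exp 0.785399)⁻¹ :=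
      inv_anti₀ (Real.exp_pos _) hb6
    have h4 : (0.4559 : ℝ) ≤ ((2.1933 : ℝ))⁻¹ := by norm_num
    linarith
  -- Part 1
  have hτ2im : (τ / 2).im = t / 2 := by simp [htdef]
  obtain ⟨w1, hw1, hw1b⟩ := a0_decomp b z (τ / 2) t ht0 hzim
    (fun n => 4 * n ^ 2 + 6 * n + 2) (fun n => 4 * n ^ 2 + 10 * n + 6) 10 (by norm_num)
    (fun n => by nlinarith) (fun n => by nlinarith)
    (fun n => by rw [hτ2im]; apply le_of_eq; push_cast; ring)
    (fun n => by rw [hτ2im]; apply le_of_eq; push_cast; ring)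
  rw [← hsdef] at hw1b
  norm_num at hw1b
  have part1 : ‖theta1 0 b z (τ / 2) - 1‖ < 0.68 := by
    rw [hw1, add_sub_cancel_left]
    have hden : (0 : ℝ) < 1 - s ^ 10 := by linarith
    have hnum : (s ^ 2 + s ^ 6) / (1 - s ^ 10) < 0.68 := by
      rw [div_lt_iff₀ hden]; nlinarith [upos 10]
    linarith
  -- Part 2
  have part2 : ‖theta1 a b z τ‖ < 1.17 := by
    rcases ha with rfl | rfl
    · obtain ⟨w2, hw2, hw2b⟩ := a0_decomp b z τ t ht0 hzim
        (fun n => 8 * n ^ 2 + 14 * n + 6) (fun n => 8 * n ^ 2 + 18 * n + 10) 22 (by norm_num)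
        (fun n => by nlinarith) (fun n => by nlinarith)
        (fun n => by apply le_of_eq; push_cast; ring)
        (fun n => by apply le_of_eq; push_cast; ring)
      rw [← hsdef] at hw2b
      norm_num at hw2b
      rw [hw2]
      have hden : (0 : ℝ) < 1 - s ^ 22 := by linarith
      have hnum : (s ^ 6 + s ^ 10) / (1 - s ^ 22) < 0.17 := by
        rw [div_lt_iff₀ hden]; nlinarith [upos 22]
      calc ‖1 + w2‖ ≤ ‖1‖ + ‖w2‖ := norm_add_le _ _
        _ < 1.17 := by simp only [norm_one]; linarith
    · obtain ⟨hdec, hg, hh, hbd⟩ := a1_decomp b z τ t ht0 hzim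
        (fun n => 8 * n ^ 2 + 6 * n + 1) (fun n => 8 * n ^ 2 + 10 * n + 3) 14 (by norm_num)
        (fun n => by nlinarith) (fun n => by nlinarith)
        (fun n => by apply le_of_eq; push_cast; ring)
        (fun n => by apply le_of_eq; push_cast; ring)
      rw [← hsdef] at hbd
      rw [show (8 * 0 ^ 2 + 6 * 0 + 1 : ℕ) = 1 from by norm_num,
        show (8 * 0 ^ 2 + 10 * 0 + 3 : ℕ) = 3 from by norm_num, pow_one] at hbd
      rw [hdec]
      have hden : (0 : ℝ) < 1 - s ^ 14 := by linarith
      have hnum : (s + s ^ 3) / (1 - s ^ 14) < 1.17 := by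
        rw [div_lt_iff₀ hden]
        nlinarith [upos 14]
      calc ‖_‖ ≤ _ := norm_add_le _ _
        _ < 1.17 := by linarith
  refine ⟨part1, part2, ?_⟩
  -- Part 3
  obtain ⟨hdec3, hg3, hh3, hbd3⟩ := a1_decomp 0 z τ t ht0 hzim
    (fun n => 8 * n ^ 2 + 6 * n + 1) (fun n => 8 * n ^ 2 + 10 * n + 3) 14 (by norm_num)
    (fun n => by nlinarith) (fun n => by nlinarith)
    (fun n => by apply le_of_eq; push_cast; ring)
    (fun n => by apply le_of_eq; push_cast; ring)
  obtain ⟨hg', hh', hbd'⟩ := tail_bound z τ (((0 : ℤ) : ℝ) / 2) t ht0 hzim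
    (fun n => (n : ℝ) + 3 / 2) (fun n => by positivity)
    (fun n => 8 * n ^ 2 + 22 * n + 15) (fun n => 8 * n ^ 2 + 26 * n + 21) 14 (by norm_num)
    (fun n => by nlinarith) (fun n => by nlinarith)
    (fun n => by apply le_of_eq; push_cast; ring)
    (fun n => by apply le_of_eq; push_cast; ring)
  rw [← hsdef] at hbd'
  rw [show (8 * 0 ^ 2 + 22 * 0 + 15 : ℕ) = 15 from by norm_num,
    show (8 * 0 ^ 2 + 26 * 0 + 21 : ℕ) = 21 from by norm_num] at hbd'
  set d0 : ℝ := ((0 : ℤ) : ℝ) / 2 with hd0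
  have eS1 : (fun n : ℕ => Gt z τ d0 (((n + 1 : ℕ) : ℝ) + 1 / 2)) =
      fun n : ℕ => Gt z τ d0 ((n : ℝ) + 3 / 2) := by
    funext n; congr 1; push_cast; ring
  have eS2 : (fun n : ℕ => Gt z τ d0 (-(((n + 1 : ℕ) : ℝ) + 1 / 2))) =
      fun n : ℕ => Gt z τ d0 (-((n : ℝ) + 3 / 2)) := by
    funext n; congr 1; push_cast; ring
  have hsplit1 : ∑' n : ℕ, Gt z τ d0 ((n : ℝ) + 1 / 2) =
      Gt z τ d0 (((0 : ℕ) : ℝ) + 1 / 2) + ∑' n : ℕ, Gt z τ d0 (((n + 1 : ℕ) : ℝ) + 1 / 2) :=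
    Summable.tsum_eq_zero_add hg3
  have hsplit2 : ∑' n : ℕ, Gt z τ d0 (-((n : ℝ) + 1 / 2)) =
      Gt z τ d0 (-(((0 : ℕ) : ℝ) + 1 / 2)) + ∑' n : ℕ, Gt z τ d0 (-(((n + 1 : ℕ) : ℝ) + 1 / 2)) :=
    Summable.tsum_eq_zero_add hh3
  rw [eS1] at hsplit1
  rw [eS2] at hsplit2
  obtain ⟨M, hMdef⟩ : ∃ M : ℂ,
      Gt z τ d0 (((0 : ℕ) : ℝ) + 1 / 2) + Gt z τ d0 (-(((0 : ℕ) : ℝ) + 1 / 2)) = M := ⟨_, rfl⟩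
  obtain ⟨w3, hw3def⟩ : ∃ w : ℂ, (∑' n : ℕ, Gt z τ d0 ((n : ℝ) + 3 / 2)) +
      ∑' n : ℕ, Gt z τ d0 (-((n : ℝ) + 3 / 2)) = w := ⟨_, rfl⟩
  have hθ3 : theta1 1 0 z τ = M + w3 := by
    rw [hdec3, hsplit1, hsplit2, ← hMdef, ← hw3def]; ring
  have hw3b : ‖w3‖ ≤ 0.00701 := by
    have htri : ‖w3‖ ≤ ‖∑' n : ℕ, Gt z τ d0 ((n : ℝ) + 3 / 2)‖ +
        ‖∑' n : ℕ, Gt z τ d0 (-((n : ℝ) + 3 / 2))‖ := by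
      rw [← hw3def]; exact norm_add_le _ _
    have hden : (0 : ℝ) < 1 - s ^ 14 := by linarith
    have : (s ^ 15 + s ^ 21) / (1 - s ^ 14) ≤ 0.00701 := by
      rw [div_le_iff₀ hden]; nlinarith [upos 14]
    linarith
  -- lower bound for M
  have hM : M = Complex.exp ((Real.pi : ℂ) * Complex.I * τ / 4) *
      (Complex.exp ((Real.pi : ℂ) * Complex.I * z) +
        Complex.exp (-((Real.pi : ℂ) * Complex.I * z))) := by
    have hfac : ∀ u v w : ℂ, Complex.exp w * (Complex.exp u + Complex.exp v) =
        Complex.exp (w + u) + Complex.exp (w + v) := by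
      intro u v w
      rw [mul_add, ← Complex.exp_add, ← Complex.exp_add]
    have hd00 : d0 = 0 := by rw [hd0]; norm_num
    rw [← hMdef, hd00, Gt, Gt, hfac]
    congr 2 <;> push_cast <;> ring
  have habsA : ‖Complex.exp ((Real.pi : ℂ) * Complex.I * τ / 4)‖ = s ^ 2 := by
    rw [Complex.norm_exp]
    have hre : ((Real.pi : ℂ) * Complex.I * τ / 4).re = -(Real.pi * t / 4) := by
      simp [Complex.mul_re, Complex.mul_im]
      ring
    rw [hre, hsdef, ← Real.exp_nat_mul]
    congr 1
    push_cast
    ring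
  have hzre' : |z.re| ≤ 1 / 8 := hzre
  have hcosb : (0.9228 : ℝ) ≤ Real.cos (Real.pi * z.re) := by
    have h1 : 1 - (Real.pi * z.re) ^ 2 / 2 ≤ Real.cos (Real.pi * z.re) :=
      Real.one_sub_sq_div_two_le_cos
    have h2 := abs_le.1 hzre'
    have hx2 : z.re ^ 2 ≤ 1 / 64 := by nlinarith [h2.1, h2.2]
    have hp2 : Real.pi ^ 2 ≤ 9.8697 := by nlinarith
    have h3 := mul_le_mul hp2 hx2 (sq_nonneg z.re) (by norm_num : (0:ℝ) ≤ 9.8697)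
    nlinarith [h3]
  have hexp2 : (2 : ℝ) ≤ Real.exp (-(Real.pi * z.im)) + Real.exp (Real.pi * z.im) := by
    have hEE : Real.exp (-(Real.pi * z.im)) * Real.exp (Real.pi * z.im) = 1 := by
      rw [← Real.exp_add]; simp
    nlinarith [Real.exp_pos (Real.pi * z.im), Real.exp_pos (-(Real.pi * z.im)),
      sq_nonneg (Real.exp (Real.pi * z.im) - 1)]
  have hre_uv : (Complex.exp ((Real.pi : ℂ) * Complex.I * z) +
      Complex.exp (-((Real.pi : ℂ) * Complex.I * z))).re =
      (Real.exp (-(Real.pi * z.im)) + Real.exp (Real.pi * z.im)) * Real.cos (Real.pi * z.re) := by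
    rw [Complex.add_re, Complex.exp_re, Complex.exp_re]
    simp [Complex.mul_re, Complex.mul_im, Real.cos_neg]
    ring
  have hcos0 : (0 : ℝ) ≤ Real.cos (Real.pi * z.re) := by linarith
  have habsuv : 2 * 0.9228 ≤ ‖Complex.exp ((Real.pi : ℂ) * Complex.I * z) +
      Complex.exp (-((Real.pi : ℂ) * Complex.I * z))‖ := by
    have h1 := Complex.re_le_norm (Complex.exp ((Real.pi : ℂ) * Complex.I * z) +
      Complex.exp (-((Real.pi : ℂ) * Complex.I * z)))
    rw [hre_uv] at h1
    nlinarith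
  have habsM : (1.8456 : ℝ) * s ^ 2 ≤ ‖M‖ := by
    rw [hM, norm_mul, habsA]
    calc (1.8456 : ℝ) * s ^ 2 = s ^ 2 * 1.8456 := by ring
      _ ≤ s ^ 2 * ‖Complex.exp ((Real.pi : ℂ) * Complex.I * z) +
          Complex.exp (-((Real.pi : ℂ) * Complex.I * z))‖ :=
        mul_le_mul_of_nonneg_left (by linarith) (sq_nonneg s)
  have hs2l : (0.4559 : ℝ) ^ 2 ≤ s ^ 2 := pow_le_pow_left₀ (by norm_num) hsl 2
  have hfin : (1.8456 : ℝ) * (0.4559 : ℝ) ^ 2 ≤ 1.8456 * s ^ 2 :=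
    mul_le_mul_of_nonneg_left hs2l (by norm_num)
  have htri2 : ‖M‖ ≤ ‖M + w3‖ + ‖w3‖ := by
    simpa using norm_add_le (M + w3) (-w3)
  rw [hθ3]
  linarith
end
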